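/- arXiv:1701.04388 — 11 statements merged into one kernel-verified Lean document; each statement's English description precedes it below -/
import Mathlib

section
/- Let g : [0,∞)^5 → [0,∞) be continuous, monotone in each coordinate (if x_i ≤ y_i for i=1,...,5 then g(x_1,...,x_5) ≤ g(y_1,...,y_5)), subhomogeneous (g(αx_1,...,αx_5) ≤ α·g(x_1,...,x_5) for all α ≥ 0), and satisfy g(1,1,1,0,2) ≤ 1 and g(1,1,1,1,1) ≤ 1 and g(1,1,1,2,0) ≤ 1. If u, v ∈ [0,∞) satisfy u < max{g(v,v,u,v,u), g(v,u,v,v+u,0)}, then u < v. -/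
theorem stmt_0 (g : ℝ → ℝ → ℝ → ℝ → ℝ → ℝ)
    (hg_cont : Continuous (fun p : ℝ × ℝ × ℝ × ℝ × ℝ => g p.1 p.2.1 p.2.2.1 p.2.2.2.1 p.2.2.2.2))
    (hg_mono : ∀ x₁ x₂ x₃ x₄ x₅ y₁ y₂ y₃ y₄ y₅ : ℝ,
      0 ≤ x₁ → 0 ≤ x₂ → 0 ≤ x₃ → 0 ≤ x₄ → 0 ≤ x₅ →
      x₁ ≤ y₁ → x₂ ≤ y₂ → x₃ ≤ y₃ → x₄ ≤ y₄ → x₅ ≤ y₅ →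
      g x₁ x₂ x₃ x₄ x₅ ≤ g y₁ y₂ y₃ y₄ y₅)
    (hg_subhom : ∀ α x₁ x₂ x₃ x₄ x₅ : ℝ, 0 ≤ α →
      0 ≤ x₁ → 0 ≤ x₂ → 0 ≤ x₃ → 0 ≤ x₄ → 0 ≤ x₅ →
      g (α * x₁) (α * x₂) (α * x₃) (α * x₄) (α * x₅) ≤ α * g x₁ x₂ x₃ x₄ x₅)
    (h1 : g 1 1 1 0 2 ≤ 1) (h2 : g 1 1 1 1 1 ≤ 1) (h3 : g 1 1 1 2 0 ≤ 1)
    (u v : ℝ) (hu : 0 ≤ u) (hv : 0 ≤ v)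
    (huv : u < max (g v v u v u) (g v u v (v + u) 0)) :
    u < v := by
  by_contra h
  push_neg at h
  have ha : g v v u v u ≤ u := by
    calc g v v u v u ≤ g (u*1) (u*1) (u*1) (u*1) (u*1) := by
          apply hg_mono <;> nlinarith
      _ ≤ u * g 1 1 1 1 1 := hg_subhom u 1 1 1 1 1 hu (by norm_num) (by norm_num) (by norm_num) (by norm_num) (by norm_num)
      _ ≤ u := by nlinarith
  have hb : g v u v (v + u) 0 ≤ u := by
    calc g v u v (v + u) 0 ≤ g (u*1) (u*1) (u*1) (u*2) (u*0) := by
          apply hg_mono <;> nlinarith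
      _ ≤ u * g 1 1 1 2 0 := hg_subhom u 1 1 1 2 0 hu (by norm_num) (by norm_num) (by norm_num) (by norm_num) (by norm_num)
      _ ≤ u := by nlinarith
  exact absurd huv (not_lt.2 (max_le ha hb))
end

section
/- Let (X,d) be a complete metric space, β ∈ (0,1), ψ an altering distance function, and T : X → X a mapping such that ψ(d(Tx,Ty)) ≤ β·ψ(d(x,y)) for all x, y ∈ X. Then T has a unique fixed point a ∈ X, and for each x ∈ X, T^n x → a as n → ∞. -/
open Filter

theorem stmt_5 {X : Type*} [MetricSpace X] [CompleteSpace X] [Nonempty X]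
    (β : ℝ) (hβ : β ∈ Set.Ioo (0:ℝ) 1) (ψ : ℝ → ℝ)
    (hψc : ContinuousOn ψ (Set.Ici 0)) (hψm : MonotoneOn ψ (Set.Ici 0))
    (hψnn : ∀ t, 0 ≤ t → 0 ≤ ψ t) (hψ0 : ∀ t, 0 ≤ t → (ψ t = 0 ↔ t = 0))
    (T : X → X)
    (hT : ∀ x y : X, ψ (dist (T x) (T y)) ≤ β * ψ (dist x y)) :
    ∃ a : X, T a = a ∧ (∀ b : X, T b = b → b = a) ∧
      ∀ x : X, Tendsto (fun n => T^[n] x) atTop (nhds a) := by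
  obtain ⟨hβ0, hβ1⟩ := hβ
  have hψz : ψ 0 = 0 := (hψ0 0 le_rfl).mpr rfl
  -- T is nonexpansive
  have nonexp : ∀ x y : X, dist (T x) (T y) ≤ dist x y := by
    intro x y
    by_contra h
    push_neg at h
    have h1 : ψ (dist x y) ≤ ψ (dist (T x) (T y)) :=
      hψm dist_nonneg dist_nonneg h.le
    have h2 := hT x y
    have h3 : 0 ≤ ψ (dist x y) := hψnn _ dist_nonneg
    have h4 : ψ (dist x y) = 0 := by nlinarith
    have h5 : dist x y = 0 := (hψ0 _ dist_nonneg).mp h4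
    have : x = y := dist_eq_zero.mp h5
    subst this
    simp at h
  -- distances along iterates tend to 0
  have iter0 : ∀ x y : X,
      Tendsto (fun n => dist (T^[n] x) (T^[n] y)) atTop (nhds 0) := by
    intro x y
    set s : ℕ → ℝ := fun n => dist (T^[n] x) (T^[n] y) with hs
    have hanti : Antitone s := by
      apply antitone_nat_of_succ_le
      intro n
      simp only [hs, Function.iterate_succ_apply']
      exact nonexp _ _
    have hbdd : BddBelow (Set.range s) :=
      ⟨0, by rintro _ ⟨n, rfl⟩; exact dist_nonneg⟩
    have hL : Tendsto s atTop (nhds (⨅ n, s n)) := tendsto_atTop_ciInf hanti hbdd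
    set L := ⨅ n, s n with hLdef
    have hL0 : 0 ≤ L := le_ciInf fun n => dist_nonneg
    have hpow : ∀ n, ψ (s n) ≤ β ^ n * ψ (s 0) := by
      intro n
      induction n with
      | zero => simp
      | succ n ih =>
        have : ψ (s (n + 1)) ≤ β * ψ (s n) := by
          simp only [hs, Function.iterate_succ_apply']
          exact hT _ _
        calc ψ (s (n + 1)) ≤ β * ψ (s n) := this
          _ ≤ β * (β ^ n * ψ (s 0)) := by
              exact mul_le_mul_of_nonneg_left ih hβ0.le
          _ = β ^ (n + 1) * ψ (s 0) := by ring
    have hψL : ∀ n, ψ L ≤ β ^ n * ψ (s 0) := by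
      intro n
      exact le_trans (hψm hL0 dist_nonneg (ciInf_le hbdd n)) (hpow n)
    have hpow0 : Tendsto (fun n : ℕ => β ^ n * ψ (s 0)) atTop (nhds 0) := by
      have := (tendsto_pow_atTop_nhds_zero_of_lt_one hβ0.le hβ1).mul_const (ψ (s 0))
      simpa using this
    have hψL0 : ψ L ≤ 0 := le_of_tendsto_of_tendsto' tendsto_const_nhds hpow0 hψL
    have : ψ L = 0 := le_antisymm hψL0 (hψnn _ hL0)
    have hLz : L = 0 := (hψ0 _ hL0).mp this
    rwa [hLz] at hL
  -- the key ε-η contraction property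
  have key : ∀ ε : ℝ, 0 < ε → ∃ η, 0 ≤ η ∧ η < ε ∧
      ∀ x y : X, dist x y ≤ ε → dist (T x) (T y) ≤ η := by
    intro ε hε
    have hψε : 0 < ψ ε := by
      rcases lt_or_eq_of_le (hψnn ε hε.le) with h | h
      · exact h
      · exact absurd ((hψ0 ε hε.le).mp h.symm) (ne_of_gt hε)
    have hcont : ContinuousWithinAt ψ (Set.Ici 0) ε := hψc ε hε.le
    rw [Metric.continuousWithinAt_iff] at hcont
    obtain ⟨δ, hδ0, hδ⟩ := hcont ((1 - β) * ψ ε) (by nlinarith)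
    refine ⟨max 0 (ε - δ / 2), le_max_left _ _, ?_, ?_⟩
    · apply max_lt hε; linarith
    · intro x y hxy
      by_contra h
      push_neg at h
      set d := dist (T x) (T y) with hd
      have hd1 : d ≤ ε := le_trans (nonexp x y) hxy
      have hd2 : ε - δ / 2 < d := lt_of_le_of_lt (le_max_right _ _) h
      have hdist : dist d ε < δ := by
        rw [Real.dist_eq, abs_lt]; constructor <;> linarith
      have := hδ dist_nonneg hdist
      rw [Real.dist_eq, abs_lt] at this
      have hψd : β * ψ ε < ψ d := by nlinarith [this.1]
      have h2 : ψ d ≤ β * ψ (dist x y) := hT x y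
      have h3 : ψ (dist x y) ≤ ψ ε := hψm dist_nonneg hε.le hxy
      nlinarith
  -- every orbit is Cauchy
  have cauchy : ∀ x : X, CauchySeq (fun n => T^[n] x) := by
    intro x
    set y : ℕ → X := fun n => T^[n] x with hy
    rw [Metric.cauchySeq_iff']
    intro ε hε
    obtain ⟨η, hη0, hηε, hη⟩ := key (ε / 2) (by linarith)
    have hcons : Tendsto (fun n => dist (y n) (y (n + 1))) atTop (nhds 0) := by
      have h := iter0 x (T x)
      have heq : (fun n => dist (y n) (y (n + 1)))
          = fun n => dist (T^[n] x) (T^[n] (T x)) := by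
        funext n
        simp only [hy, Function.iterate_succ_apply]
      rw [heq]
      exact h
    have hgap : 0 < ε / 2 - η := by linarith
    obtain ⟨N, hN⟩ := (Metric.tendsto_atTop.mp hcons) (ε / 2 - η) hgap
    have hNc : ∀ n ≥ N, dist (y n) (y (n + 1)) ≤ ε / 2 - η := by
      intro n hn
      have := hN n hn
      rw [Real.dist_eq] at this
      have := abs_lt.mp this
      linarith [this.2]
    have claim : ∀ p, dist (y N) (y (N + p)) ≤ ε / 2 := by
      intro p
      induction p with
      | zero => rw [Nat.add_zero, dist_self]; linarith
      | succ p ih =>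
        have step : dist (y (N + 1)) (y (N + p + 1)) ≤ η := by
          have e1 : y (N + 1) = T (y N) := by
            simp [hy, Function.iterate_succ_apply']
          have e2 : y (N + p + 1) = T (y (N + p)) := by
            simp [hy, Function.iterate_succ_apply']
          rw [e1, e2]
          exact hη _ _ ih
        calc dist (y N) (y (N + (p + 1)))
            ≤ dist (y N) (y (N + 1)) + dist (y (N + 1)) (y (N + (p + 1))) :=
              dist_triangle _ _ _
          _ ≤ (ε / 2 - η) + η := by
              apply add_le_add (hNc N le_rfl)
              have : N + (p + 1) = N + p + 1 := by ring
              rw [this]; exact step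
          _ = ε / 2 := by ring
    refine ⟨N, fun n hn => ?_⟩
    obtain ⟨p, rfl⟩ := Nat.exists_eq_add_of_le hn
    rw [dist_comm]
    calc dist (y N) (y (N + p)) ≤ ε / 2 := claim p
      _ < ε := by linarith
  -- construct the fixed point
  obtain ⟨x0⟩ := ‹Nonempty X›
  obtain ⟨a, ha⟩ := cauchySeq_tendsto_of_complete (cauchy x0)
  have hTcont : Continuous T :=
    (LipschitzWith.of_dist_le_mul fun x y => by
      simpa using nonexp x y : LipschitzWith 1 T).continuous
  have hfix : T a = a := by
    have h1 : Tendsto (fun n => T^[n + 1] x0) atTop (nhds a) :=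
      ha.comp (tendsto_add_atTop_nat 1)
    have h2 : Tendsto (fun n => T (T^[n] x0)) atTop (nhds (T a)) :=
      (hTcont.tendsto a).comp ha
    have h3 : (fun n => T (T^[n] x0)) = fun n => T^[n + 1] x0 := by
      funext n; rw [Function.iterate_succ_apply']
    rw [h3] at h2
    exact tendsto_nhds_unique h2 h1
  refine ⟨a, hfix, ?_, ?_⟩
  · intro b hb
    have h1 : ψ (dist b a) ≤ β * ψ (dist b a) := by
      have := hT b a
      rwa [hb, hfix] at this
    have h2 : 0 ≤ ψ (dist b a) := hψnn _ dist_nonneg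
    have h3 : ψ (dist b a) = 0 := by nlinarith
    exact dist_eq_zero.mp ((hψ0 _ dist_nonneg).mp h3)
  · intro x
    have h1 : Tendsto (fun n => dist (T^[n] x) (T^[n] a)) atTop (nhds 0) :=
      iter0 x a
    have h2 : ∀ n, T^[n] a = a := fun n => Function.iterate_fixed hfix n
    have h3 : Tendsto (fun n => dist (T^[n] x) a) atTop (nhds 0) := by
      simpa [h2] using h1
    exact tendsto_iff_dist_tendsto_zero.mpr h3
end

section
/- Let (X,d) be a complete metric space and T : X → X a mapping satisfying ψ(d(Tx,Ty)) ≤ ψ(d(x,y)) − h(d(x,y)) for all x, y ∈ X, where ψ, h : [0,∞) → [0,∞) are continuous, nondecreasing, and satisfy ψ(t) = 0 iff t = 0 and h(t) = 0 iff t = 0. Then T has a unique fixed point. -/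
theorem stmt_6 {X : Type*} [MetricSpace X] [CompleteSpace X] [Nonempty X]
    (ψ h : ℝ → ℝ)
    (hψc : ContinuousOn ψ (Set.Ici 0)) (hψm : MonotoneOn ψ (Set.Ici 0))
    (hψnn : ∀ t, 0 ≤ t → 0 ≤ ψ t) (hψ0 : ∀ t, 0 ≤ t → (ψ t = 0 ↔ t = 0))
    (hhc : ContinuousOn h (Set.Ici 0)) (hhm : MonotoneOn h (Set.Ici 0))
    (hhnn : ∀ t, 0 ≤ t → 0 ≤ h t) (hh0 : ∀ t, 0 ≤ t → (h t = 0 ↔ t = 0))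
    (T : X → X)
    (hT : ∀ x y : X, ψ (dist (T x) (T y)) ≤ ψ (dist x y) - h (dist x y)) :
    ∃! a : X, T a = a := by
  have hpos : ∀ t, 0 < t → 0 < h t := fun t ht =>
    lt_of_le_of_ne (hhnn t ht.le) (fun e => ht.ne' ((hh0 t ht.le).mp e.symm))
  -- T is nonexpansive
  have nonexp : ∀ x y : X, dist (T x) (T y) ≤ dist x y := by
    intro x y
    by_contra hlt
    push_neg at hlt
    have h1 := hT x y
    have h2 : ψ (dist x y) ≤ ψ (dist (T x) (T y)) :=
      hψm dist_nonneg dist_nonneg hlt.le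
    have h3 : h (dist x y) ≤ 0 := by linarith
    have h4 : dist x y = 0 :=
      (hh0 _ dist_nonneg).mp (le_antisymm h3 (hhnn _ dist_nonneg))
    have hxy : x = y := dist_eq_zero.mp h4
    subst hxy
    simp at hlt
  -- the orbit
  set x : ℕ → X := fun n => T^[n] (Classical.arbitrary X) with hxdef
  have hxs : ∀ n, x (n + 1) = T (x n) := fun n => Function.iterate_succ_apply' T n _
  obtain ⟨D, hDdef⟩ : ∃ D : ℕ → ℝ, ∀ n, D n = dist (x n) (x (n + 1)) := ⟨_, fun _ => rfl⟩
  have hDnn : ∀ n, 0 ≤ D n := fun n => (hDdef n) ▸ dist_nonneg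
  have hDanti : ∀ n, D (n + 1) ≤ D n := by
    intro n
    rw [hDdef, hDdef, hxs (n + 1), hxs n]
    exact nonexp _ _
  have hAnti : Antitone D := antitone_nat_of_succ_le hDanti
  have hBdd : BddBelow (Set.range D) := ⟨0, by rintro _ ⟨n, rfl⟩; exact hDnn n⟩
  have hDr : Filter.Tendsto D Filter.atTop (nhds (⨅ n, D n)) :=
    tendsto_atTop_ciInf hAnti hBdd
  have hrnn : 0 ≤ ⨅ n, D n := le_ciInf fun n => hDnn n
  have hrle : ∀ n, (⨅ n, D n) ≤ D n := fun n => ciInf_le hBdd n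
  -- the infimum is 0
  have hr0 : (⨅ n, D n) = 0 := by
    by_contra hne
    have hr : 0 < ⨅ n, D n := lt_of_le_of_ne hrnn (Ne.symm hne)
    have key : ∀ n, ψ (D (n + 1)) ≤ ψ (D n) - h (⨅ n, D n) := by
      intro n
      have h1 := hT (x n) (x (n + 1))
      rw [← hxs n, ← hxs (n + 1), ← hDdef n, ← hDdef (n + 1)] at h1
      have h2 : h (⨅ n, D n) ≤ h (D n) := hhm hrnn (hDnn n) (hrle n)
      linarith
    have decn : ∀ n : ℕ, ψ (D n) ≤ ψ (D 0) - n * h (⨅ n, D n) := by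
      intro n
      induction n with
      | zero => simp
      | succ n ih =>
        have := key n
        push_cast
        push_cast at ih
        linarith
    obtain ⟨n, hn⟩ := exists_nat_gt (ψ (D 0) / h (⨅ n, D n))
    have hhr := hpos _ hr
    have h1 : ψ (D 0) < n * h (⨅ n, D n) := by
      rwa [div_lt_iff₀ hhr] at hn
    have h2 := decn n
    have h3 := hψnn (D n) (hDnn n)
    linarith
  rw [hr0] at hDr
  -- Cauchy
  have hcauchy : CauchySeq x := by
    rw [Metric.cauchySeq_iff']
    intro ε hε
    have hεh : 0 < h ε := hpos ε hε
    have hcont : ContinuousAt ψ ε :=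
      (hψc ε hε.le).continuousAt (Ici_mem_nhds hε)
    obtain ⟨δ, hδ, hδψ⟩ := Metric.continuousAt_iff.mp hcont (h ε / 4) (by positivity)
    obtain ⟨N, hN⟩ : ∃ N, ∀ k ≥ N, D k < δ / 4 := by
      obtain ⟨N, hN⟩ := (Metric.tendsto_atTop.mp hDr) (δ / 4) (by positivity)
      refine ⟨N, fun k hk => ?_⟩
      have := hN k hk
      rwa [Real.dist_eq, sub_zero, abs_of_nonneg (hDnn k)] at this
    refine ⟨N, fun n hn => ?_⟩
    rw [dist_comm]
    have main : ∀ m, N ≤ m → dist (x N) (x m) < ε := by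
      intro m
      induction m with
      | zero =>
        intro h0
        interval_cases N
        simpa using hε
      | succ m ih =>
        intro hm
        rcases Nat.lt_or_ge m N with hNm | hNm
        · have : N = m + 1 := le_antisymm hm hNm
          rw [← this]
          simpa using hε
        · have hm' : dist (x N) (x m) < ε := ih hNm
          by_contra hge
          push_neg at hge
          have ht'ub : dist (x N) (x (m + 1)) < ε + δ / 4 := by
            have h1 := dist_triangle (x N) (x m) (x (m + 1))
            have h2 := hN m hNm
            rw [hDdef m] at h2
            linarith
          have hψt' : ψ (dist (x N) (x (m + 1))) < ψ ε + h ε / 4 := by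
            have hd : dist (dist (x N) (x (m + 1))) ε < δ := by
              rw [Real.dist_eq, abs_lt]
              constructor <;> linarith
            have := hδψ hd
            rw [Real.dist_eq, abs_lt] at this
            linarith [this.2]
          have hht' : h ε ≤ h (dist (x N) (x (m + 1))) :=
            hhm hε.le dist_nonneg hge
          have hs := hT (x N) (x (m + 1))
          rw [← hxs N, ← hxs (m + 1)] at hs
          have hsψ : ψ (dist (x (N + 1)) (x (m + 1 + 1))) ≤ ψ ε - 3 * h ε / 4 := by
            linarith
          have hslt : dist (x (N + 1)) (x (m + 1 + 1)) ≤ ε - δ / 2 := by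
            by_contra hc
            push_neg at hc
            rcases le_or_gt ε (dist (x (N + 1)) (x (m + 1 + 1))) with hce | hce
            · have := hψm hε.le dist_nonneg hce
              linarith
            · have hd : dist (dist (x (N + 1)) (x (m + 1 + 1))) ε < δ := by
                rw [Real.dist_eq, abs_lt]
                constructor <;> linarith
              have := hδψ hd
              rw [Real.dist_eq, abs_lt] at this
              linarith [this.1]
          have htri : dist (x N) (x (m + 1)) ≤
              dist (x N) (x (N + 1)) + dist (x (N + 1)) (x (m + 1 + 1))
                + dist (x (m + 1 + 1)) (x (m + 1)) := dist_triangle4 _ _ _ _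
          have h5 := hN N le_rfl
          have h6 := hN (m + 1) (le_trans hNm (Nat.le_succ m))
          rw [hDdef N] at h5
          rw [hDdef (m + 1)] at h6
          rw [dist_comm (x (m + 1 + 1)) (x (m + 1))] at htri
          linarith
    exact main n hn
  obtain ⟨a, ha⟩ := cauchySeq_tendsto_of_complete hcauchy
  have hTc : Continuous T := by
    have : LipschitzWith 1 T :=
      LipschitzWith.of_dist_le_mul fun u v => by simpa using nonexp u v
    exact this.continuous
  have h1 : Filter.Tendsto (fun n => x (n + 1)) Filter.atTop (nhds a) :=
    ha.comp (Filter.tendsto_add_atTop_nat 1)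
  have h2 : Filter.Tendsto (fun n => T (x n)) Filter.atTop (nhds (T a)) :=
    (hTc.tendsto a).comp ha
  have h3 : (fun n => T (x n)) = fun n => x (n + 1) := funext fun n => (hxs n).symm
  rw [h3] at h2
  have hfix : T a = a := tendsto_nhds_unique h2 h1
  refine ⟨a, hfix, fun b hb => ?_⟩
  have h4 := hT b a
  rw [hb, hfix] at h4
  have h5 : h (dist b a) ≤ 0 := by linarith
  have h6 : dist b a = 0 :=
    (hh0 _ dist_nonneg).mp (le_antisymm h5 (hhnn _ dist_nonneg))
  exact dist_eq_zero.mp h6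
end

section
/- Let (X,d) be a complete metric space and T : X → X satisfy ψ(d(Tx,Ty)) ≤ ψ(M(x,y)) − h(M(x,y)) for all x, y ∈ X, where M(x,y) = max{d(x,y), d(x,Tx), d(y,Ty), (d(x,Ty)+d(y,Tx))/2}, ψ is an altering distance function, and h : [0,∞) → [0,∞) is lower semicontinuous with h(t) = 0 iff t = 0. Then T has a unique fixed point. -/
theorem stmt_7 {X : Type*} [MetricSpace X] [CompleteSpace X] [Nonempty X]
    (ψ h : ℝ → ℝ)
    (hψc : ContinuousOn ψ (Set.Ici 0)) (hψm : MonotoneOn ψ (Set.Ici 0))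
    (hψnn : ∀ t, 0 ≤ t → 0 ≤ ψ t) (hψ0 : ∀ t, 0 ≤ t → (ψ t = 0 ↔ t = 0))
    (hhl : LowerSemicontinuousOn h (Set.Ici 0))
    (hhnn : ∀ t, 0 ≤ t → 0 ≤ h t) (hh0 : ∀ t, 0 ≤ t → (h t = 0 ↔ t = 0))
    (T : X → X)
    (hT : ∀ x y : X,
      ψ (dist (T x) (T y)) ≤
        ψ (max (max (dist x y) (dist x (T x)))
            (max (dist y (T y)) ((dist x (T y) + dist y (T x)) / 2))) -
        h (max (max (dist x y) (dist x (T x)))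
            (max (dist y (T y)) ((dist x (T y) + dist y (T x)) / 2)))) :
    ∃! a : X, T a = a := by
  classical
  have hkey : ∀ s : ℝ, 0 ≤ s → ψ s ≤ ψ s - h s → s = 0 := by
    intro s hs hle
    have h2 : 0 ≤ h s := hhnn s hs
    exact (hh0 s hs).1 (le_antisymm (by linarith) h2)
  have hhpos : ∀ s : ℝ, 0 < s → 0 < h s := by
    intro s hs
    rcases lt_or_eq_of_le (hhnn s hs.le) with h' | h'
    · exact h'
    · exact absurd ((hh0 s hs.le).1 h'.symm) hs.ne'
  -- convergence of ψ along nonnegative sequences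
  have hψt : ∀ (u : ℕ → ℝ) (c : ℝ), 0 ≤ c → (∀ᶠ n in Filter.atTop, 0 ≤ u n) →
      Filter.Tendsto u Filter.atTop (nhds c) →
      Filter.Tendsto (fun n => ψ (u n)) Filter.atTop (nhds (ψ c)) := by
    intro u c hc hu ht
    have h1 : Filter.Tendsto u Filter.atTop (nhdsWithin c (Set.Ici 0)) :=
      tendsto_nhdsWithin_iff.2 ⟨ht, hu⟩
    exact (hψc c hc).tendsto.comp h1
  -- lower semicontinuity of h along nonnegative sequences
  have hht : ∀ (u : ℕ → ℝ) (c : ℝ), 0 ≤ c → (∀ᶠ n in Filter.atTop, 0 ≤ u n) →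
      Filter.Tendsto u Filter.atTop (nhds c) → ∀ b < h c,
      ∀ᶠ n in Filter.atTop, b < h (u n) := by
    intro u c hc hu ht b hb
    have h1 : Filter.Tendsto u Filter.atTop (nhdsWithin c (Set.Ici 0)) :=
      tendsto_nhdsWithin_iff.2 ⟨ht, hu⟩
    exact h1.eventually (hhl c hc b hb)
  obtain ⟨x₀⟩ := ‹Nonempty X›
  set x : ℕ → X := fun n => T^[n] x₀ with hx
  have hxs : ∀ n, x (n + 1) = T (x n) := fun n => Function.iterate_succ_apply' T n x₀
  set d : ℕ → ℝ := fun n => dist (x n) (x (n + 1)) with hd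
  have hdnn : ∀ n, 0 ≤ d n := fun n => dist_nonneg
  -- step inequalities
  have hstep : ∀ n, d (n + 1) ≤ d n ∧ ψ (d (n + 1)) ≤ ψ (d n) - h (d n) := by
    intro n
    have H := hT (x n) (x (n + 1))
    rw [← hxs n, ← hxs (n + 1)] at H
    have htri : dist (x n) (x (n + 1 + 1)) ≤ d n + d (n + 1) := dist_triangle _ _ _
    have hM : max (max (dist (x n) (x (n + 1))) (dist (x n) (x (n + 1))))
        (max (dist (x (n + 1)) (x (n + 1 + 1)))
          ((dist (x n) (x (n + 1 + 1)) + dist (x (n + 1)) (x (n + 1))) / 2))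
        = max (d n) (d (n + 1)) := by
      rw [dist_self, max_self]
      have hc : (dist (x n) (x (n + 1 + 1)) + 0) / 2 ≤ max (d n) (d (n + 1)) := by
        rcases le_total (d n) (d (n + 1)) with hc | hc
        · rw [max_eq_right hc]; linarith
        · rw [max_eq_left hc]; linarith
      rw [← max_assoc, max_eq_left hc]
    rw [hM] at H
    have hle : d (n + 1) ≤ d n := by
      by_contra hlt
      push_neg at hlt
      rw [max_eq_right hlt.le] at H
      have hz := hkey _ (hdnn (n + 1)) H
      have := hdnn n
      rw [hz] at hlt
      linarith
    refine ⟨hle, ?_⟩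
    rwa [max_eq_left hle] at H
  have hanti : Antitone d := antitone_nat_of_succ_le fun n => (hstep n).1
  have hdle : ∀ {m n}, m ≤ n → d n ≤ d m := fun hmn => hanti hmn
  -- limit of d
  have hbdd : BddBelow (Set.range d) := ⟨0, by rintro _ ⟨n, rfl⟩; exact hdnn n⟩
  set r : ℝ := ⨅ n, d n with hr
  have hrconv : Filter.Tendsto d Filter.atTop (nhds r) := tendsto_atTop_ciInf hanti hbdd
  have hrnn : 0 ≤ r := le_ciInf hdnn
  have hr0 : r = 0 := by
    by_contra hr0
    have hrpos : 0 < r := lt_of_le_of_ne hrnn (Ne.symm hr0)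
    have hψ1 : Filter.Tendsto (fun n => ψ (d n)) Filter.atTop (nhds (ψ r)) :=
      hψt d r hrnn (Filter.Eventually.of_forall hdnn) hrconv
    have hψ2 : Filter.Tendsto (fun n => ψ (d (n + 1))) Filter.atTop (nhds (ψ r)) :=
      hψt _ r hrnn (Filter.Eventually.of_forall fun n => hdnn (n + 1))
        (hrconv.comp (Filter.tendsto_add_atTop_nat 1))
    have hdiff : Filter.Tendsto (fun n => ψ (d n) - ψ (d (n + 1))) Filter.atTop (nhds 0) := by
      have := hψ1.sub hψ2; simpa using this
    have h1 : ∀ᶠ n in Filter.atTop, ψ (d n) - ψ (d (n + 1)) < h r / 2 :=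
      (tendsto_order.1 hdiff).2 _ (by have := hhpos r hrpos; linarith)
    have h2 : ∀ᶠ n in Filter.atTop, h r / 2 < h (d n) :=
      hht d r hrnn (Filter.Eventually.of_forall hdnn) hrconv _
        (by have := hhpos r hrpos; linarith)
    obtain ⟨n, hn1, hn2⟩ := (h1.and h2).exists
    have := (hstep n).2
    linarith
  have hd0 : Filter.Tendsto d Filter.atTop (nhds 0) := hr0 ▸ hrconv
  -- Cauchy
  have hC : CauchySeq x := by
    rw [Metric.cauchySeq_iff]
    by_contra hnc
    push_neg at hnc
    obtain ⟨ε, hε, hcc⟩ := hnc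
    have hex : ∀ k, ∃ p, k ≤ p ∧ ∃ q, p < q ∧ ε ≤ dist (x p) (x q) := by
      intro k
      obtain ⟨m, hm, n, hn, hd'⟩ := hcc k
      rcases lt_trichotomy m n with hmn | hmn | hmn
      · exact ⟨m, hm, n, hmn, hd'⟩
      · exfalso; rw [hmn, dist_self] at hd'; linarith
      · exact ⟨n, hn, m, hmn, by rwa [dist_comm]⟩
    choose nk hnk1 hnk2 using hex
    set mk : ℕ → ℕ := fun k => Nat.find (hnk2 k) with hmkdef
    have hmks : ∀ k, nk k < mk k ∧ ε ≤ dist (x (nk k)) (x (mk k)) := fun k => Nat.find_spec (hnk2 k)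
    set t : ℕ → ℝ := fun k => dist (x (nk k)) (x (mk k)) with ht
    have htge : ∀ k, ε ≤ t k := fun k => (hmks k).2
    have htle : ∀ k, t k ≤ ε + d k := by
      intro k
      obtain ⟨j, hj⟩ : ∃ j, mk k = j + 1 := ⟨mk k - 1, by have := (hmks k).1; omega⟩
      have hjge : nk k ≤ j := by have := (hmks k).1; omega
      have hjlt : dist (x (nk k)) (x j) < ε := by
        rcases eq_or_lt_of_le hjge with he | hlt
        · rw [← he, dist_self]; exact hε
        · have hjlt' : j < mk k := by rw [hj]; exact j.lt_succ_self
          have := Nat.find_min (hnk2 k) (m := j) hjlt'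
          push_neg at this
          exact this hlt
      have htri : t k ≤ dist (x (nk k)) (x j) + dist (x j) (x (j + 1)) := by
        show dist (x (nk k)) (x (mk k)) ≤ _
        rw [hj]
        exact dist_triangle _ _ _
      have : dist (x j) (x (j + 1)) ≤ d k := hdle (le_trans (hnk1 k) hjge)
      linarith
    have htconv : Filter.Tendsto t Filter.atTop (nhds ε) := by
      have h1 : Filter.Tendsto (fun k => ε + d k) Filter.atTop (nhds ε) := by
        have := hd0.const_add ε; simpa using this
      exact tendsto_of_tendsto_of_tendsto_of_le_of_le tendsto_const_nhds h1
        htge htle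
    set M : ℕ → ℝ := fun k =>
      max (max (dist (x (nk k)) (x (mk k))) (dist (x (nk k)) (x (nk k + 1))))
        (max (dist (x (mk k)) (x (mk k + 1)))
          ((dist (x (nk k)) (x (mk k + 1)) + dist (x (mk k)) (x (nk k + 1))) / 2)) with hM
    have hMnn : ∀ k, 0 ≤ M k := fun k =>
      le_trans dist_nonneg (le_trans (le_max_left _ _) (le_max_left _ _))
    have hdnkk : ∀ k, d (nk k) ≤ d k := fun k => hdle (hnk1 k)
    have hdmkk : ∀ k, d (mk k) ≤ d k := fun k => hdle (le_trans (hnk1 k) (hmks k).1.le)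
    have hMge : ∀ k, t k ≤ M k := fun k => le_trans (le_max_left _ _) (le_max_left _ _)
    have hMle : ∀ k, M k ≤ t k + 2 * d k := by
      intro k
      have h1 : dist (x (nk k)) (x (mk k + 1)) ≤ t k + d (mk k) := dist_triangle _ _ _
      have h2 : dist (x (mk k)) (x (nk k + 1)) ≤ t k + d (nk k) := by
        have := dist_triangle (x (mk k)) (x (nk k)) (x (nk k + 1))
        rw [dist_comm (x (mk k)) (x (nk k))] at this
        exact this
      have h3 := hdnkk k; have h4 := hdmkk k
      have h5 := htge k; have h6 := hdnn k
      rw [hM]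
      apply max_le (max_le ?_ ?_) (max_le ?_ ?_)
      · show t k ≤ _; linarith
      · show d (nk k) ≤ _; linarith
      · show d (mk k) ≤ _; linarith
      · linarith
    have hMconv : Filter.Tendsto M Filter.atTop (nhds ε) := by
      have h1 : Filter.Tendsto (fun k => t k + 2 * d k) Filter.atTop (nhds ε) := by
        have := htconv.add ((hd0.const_mul 2))
        simpa using this
      exact tendsto_of_tendsto_of_tendsto_of_le_of_le htconv h1 hMge hMle
    -- the contractive inequality along the subsequences
    have Hk : ∀ k, ψ (dist (x (nk k + 1)) (x (mk k + 1))) ≤ ψ (M k) - h (M k) := by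
      intro k
      have H := hT (x (nk k)) (x (mk k))
      rw [← hxs (nk k), ← hxs (mk k)] at H
      exact H
    -- eventually d k < ε / 4
    have hev : ∀ᶠ k in Filter.atTop, d k < ε / 4 :=
      (tendsto_order.1 hd0).2 _ (by linarith)
    have hulow : ∀ k, t k - 2 * d k ≤ dist (x (nk k + 1)) (x (mk k + 1)) := by
      intro k
      have h1 : t k ≤ d (nk k) + dist (x (nk k + 1)) (x (mk k + 1)) + d (mk k) := by
        have t1 := dist_triangle (x (nk k)) (x (nk k + 1)) (x (mk k + 1))
        have t2 := dist_triangle (x (nk k)) (x (mk k + 1)) (x (mk k))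
        rw [dist_comm (x (mk k + 1)) (x (mk k))] at t2
        calc t k ≤ dist (x (nk k)) (x (mk k + 1)) + d (mk k) := by
              have := dist_triangle (x (nk k)) (x (mk k + 1)) (x (mk k))
              rw [dist_comm (x (mk k + 1)) (x (mk k))] at this
              exact this
          _ ≤ d (nk k) + dist (x (nk k + 1)) (x (mk k + 1)) + d (mk k) := by linarith
      have h3 := hdnkk k; have h4 := hdmkk k
      linarith
    have hkey2 : ∀ᶠ k in Filter.atTop, h (M k) ≤ ψ (M k) - ψ (ε - 2 * d k) := by
      filter_upwards [hev] with k hk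
      have h0 : 0 ≤ ε - 2 * d k := by have := hdnn k; linarith
      have h1 : ε - 2 * d k ≤ dist (x (nk k + 1)) (x (mk k + 1)) := by
        have := hulow k; have := htge k; linarith
      have h2 : ψ (ε - 2 * d k) ≤ ψ (dist (x (nk k + 1)) (x (mk k + 1))) :=
        hψm h0 (le_trans h0 h1 : (0:ℝ) ≤ _) h1
      have := Hk k
      linarith
    have hψM : Filter.Tendsto (fun k => ψ (M k)) Filter.atTop (nhds (ψ ε)) :=
      hψt M ε hε.le (Filter.Eventually.of_forall hMnn) hMconv
    have hψe : Filter.Tendsto (fun k => ψ (ε - 2 * d k)) Filter.atTop (nhds (ψ ε)) := by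
      apply hψt _ ε hε.le
      · filter_upwards [hev] with k hk; have := hdnn k; linarith
      · have := hd0.const_mul 2
        have h2 : Filter.Tendsto (fun k => ε - 2 * d k) Filter.atTop (nhds (ε - 0)) :=
          tendsto_const_nhds.sub (by simpa using this)
        simpa using h2
    have hdiff : Filter.Tendsto (fun k => ψ (M k) - ψ (ε - 2 * d k)) Filter.atTop (nhds 0) := by
      have := hψM.sub hψe; simpa using this
    have h1 : ∀ᶠ k in Filter.atTop, ψ (M k) - ψ (ε - 2 * d k) < h ε / 2 :=
      (tendsto_order.1 hdiff).2 _ (by have := hhpos ε hε; linarith)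
    have h2 : ∀ᶠ k in Filter.atTop, h ε / 2 < h (M k) :=
      hht M ε hε.le (Filter.Eventually.of_forall hMnn) hMconv _
        (by have := hhpos ε hε; linarith)
    obtain ⟨k, hk1, hk2, hk3⟩ := (hkey2.and (h1.and h2)).exists
    linarith
  -- limit is a fixed point
  obtain ⟨a, hxa⟩ := cauchySeq_tendsto_of_complete hC
  have hxa1 : Filter.Tendsto (fun n => x (n + 1)) Filter.atTop (nhds a) :=
    hxa.comp (Filter.tendsto_add_atTop_nat 1)
  set ρ : ℝ := dist a (T a) with hρ
  have hρ0 : ρ = 0 := by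
    by_contra hρ0
    have hρpos : 0 < ρ := lt_of_le_of_ne dist_nonneg (Ne.symm hρ0)
    have hclose : ∀ᶠ n in Filter.atTop, dist (x n) a < ρ / 4 := by
      exact (tendsto_order.1 (tendsto_iff_dist_tendsto_zero.1 hxa)).2 (ρ / 4) (by linarith)
    have hclose1 : ∀ᶠ n in Filter.atTop, dist (x (n + 1)) a < ρ / 4 := by
      exact (tendsto_order.1 (tendsto_iff_dist_tendsto_zero.1 hxa1)).2 (ρ / 4) (by linarith)
    have hMeq : ∀ᶠ n in Filter.atTop,
        ψ (dist (x (n + 1)) (T a)) ≤ ψ ρ - h ρ := by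
      filter_upwards [hclose, hclose1] with n h1 h2
      have H := hT (x n) a
      rw [← hxs n] at H
      have hdn : d n < ρ / 2 := by
        have := dist_triangle (x n) a (x (n + 1))
        rw [dist_comm a (x (n + 1))] at this
        calc d n ≤ dist (x n) a + dist (x (n + 1)) a := this
          _ < ρ / 2 := by linarith
      have hhalf : (dist (x n) (T a) + dist a (x (n + 1))) / 2 ≤ ρ := by
        have t1 : dist (x n) (T a) ≤ dist (x n) a + ρ := dist_triangle _ _ _
        have t2 : dist a (x (n + 1)) = dist (x (n + 1)) a := dist_comm _ _
        rw [t2]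
        linarith
      have hMeq' : max (max (dist (x n) a) (dist (x n) (x (n + 1))))
          (max (dist a (T a)) ((dist (x n) (T a) + dist a (x (n + 1))) / 2)) = ρ := by
        rw [max_eq_left hhalf]
        rw [max_eq_right (show max (dist (x n) a) (dist (x n) (x (n + 1))) ≤ ρ from
          max_le (by linarith) (by have : d n = dist (x n) (x (n+1)) := rfl; linarith))]
      rw [hMeq'] at H
      exact H
    have hdconv : Filter.Tendsto (fun n => dist (x (n + 1)) (T a)) Filter.atTop (nhds ρ) :=
      hxa1.dist tendsto_const_nhds
    have hψconv : Filter.Tendsto (fun n => ψ (dist (x (n + 1)) (T a))) Filter.atTop (nhds (ψ ρ)) :=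
      hψt _ ρ dist_nonneg (Filter.Eventually.of_forall fun n => dist_nonneg) hdconv
    have hfin : ψ ρ ≤ ψ ρ - h ρ := le_of_tendsto hψconv hMeq
    exact hρ0 (hkey ρ dist_nonneg hfin)
  have hfix : T a = a := by
    have : dist a (T a) = 0 := hρ0
    exact (dist_eq_zero.1 this).symm
  refine ⟨a, hfix, ?_⟩
  intro b hb
  have H := hT b a
  rw [hb, hfix] at H
  have hhalf : (dist b a + dist a b) / 2 = dist b a := by rw [dist_comm a b]; ring
  rw [dist_self, dist_self, hhalf, max_eq_left dist_nonneg, max_eq_right dist_nonneg,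
    max_self] at H
  exact dist_eq_zero.1 (hkey _ dist_nonneg H)
end

section
/- Let (X,d) be a complete metric space and T : X → X satisfy ψ(d(Tx,Ty)) ≤ ψ(M(x,y)) − h(max{d(x,y), d(y,Ty)}) for all x, y ∈ X, where M(x,y) = max{d(x,y), d(x,Tx), d(y,Ty), (d(x,Ty)+d(y,Tx))/2}, ψ is an altering distance function, and h : [0,∞) → [0,∞) is continuous with h(t) = 0 iff t = 0. Then T has a unique fixed point. -/
open Filter Topology

private lemma tendsto_comp_Ici {f : ℝ → ℝ} (hf : ContinuousOn f (Set.Ici 0)) {s : ℕ → ℝ}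
    {l : ℝ} (hs : ∀ n, 0 ≤ s n) (hl : Tendsto s atTop (𝓝 l)) :
    Tendsto (fun n => f (s n)) atTop (𝓝 (f l)) := by
  have hl0 : 0 ≤ l := ge_of_tendsto' hl hs
  exact (hf l hl0).tendsto.comp
    (tendsto_nhdsWithin_iff.mpr ⟨hl, Filter.Eventually.of_forall hs⟩)

theorem stmt_8 {X : Type*} [MetricSpace X] [CompleteSpace X] [Nonempty X]
    (ψ h : ℝ → ℝ)
    (hψc : ContinuousOn ψ (Set.Ici 0)) (hψm : MonotoneOn ψ (Set.Ici 0))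
    (hψnn : ∀ t, 0 ≤ t → 0 ≤ ψ t) (hψ0 : ∀ t, 0 ≤ t → (ψ t = 0 ↔ t = 0))
    (hhc : ContinuousOn h (Set.Ici 0))
    (hhnn : ∀ t, 0 ≤ t → 0 ≤ h t) (hh0 : ∀ t, 0 ≤ t → (h t = 0 ↔ t = 0))
    (T : X → X)
    (hT : ∀ x y : X,
      ψ (dist (T x) (T y)) ≤
        ψ (max (max (dist x y) (dist x (T x)))
            (max (dist y (T y)) ((dist x (T y) + dist y (T x)) / 2))) -
        h (max (dist x y) (dist y (T y)))) :
    ∃! a : X, T a = a := by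
  have hhpos : ∀ t, 0 ≤ t → h t ≤ 0 → t = 0 := fun t ht hle =>
    (hh0 t ht).mp (le_antisymm hle (hhnn t ht))
  -- key step
  have key : ∀ x : X, dist (T x) (T (T x)) ≤ dist x (T x) ∧
      ψ (dist (T x) (T (T x))) ≤ ψ (dist x (T x)) - h (dist x (T x)) := by
    intro x
    set a := dist x (T x) with ha
    set b := dist (T x) (T (T x)) with hb
    have ha0 : 0 ≤ a := dist_nonneg
    have hb0 : 0 ≤ b := dist_nonneg
    have h1 := hT x (T x)
    rw [← ha, ← hb] at h1
    have hM : max (max a a) (max b ((dist x (T (T x)) + dist (T x) (T x)) / 2)) ≤ max a b := by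
      have htri : dist x (T (T x)) ≤ a + b := dist_triangle x (T x) (T (T x))
      have h2 : (dist x (T (T x)) + dist (T x) (T x)) / 2 ≤ max a b := by
        rw [dist_self]
        have := le_max_left a b
        have := le_max_right a b
        linarith
      exact max_le (max_le (le_max_left a b) (le_max_left a b))
        (max_le (le_max_right a b) h2)
    have hMnn : 0 ≤ max (max a a) (max b ((dist x (T (T x)) + dist (T x) (T x)) / 2)) :=
      le_trans ha0 (le_trans (le_max_left a a) (le_max_left _ _))
    have h2 : ψ b ≤ ψ (max a b) - h (max a b) := by
      have := hψm hMnn (le_trans ha0 (le_trans (le_max_left a b) le_rfl) :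
        (0:ℝ) ≤ max a b) hM
      linarith
    rcases le_or_gt b a with hba | hab
    · rw [max_eq_left hba] at h2
      exact ⟨hba, h2⟩
    · rw [max_eq_right hab.le] at h2
      have hb' : b = 0 := hhpos b hb0 (by linarith)
      exact absurd (hb' ▸ hab) (by linarith : ¬ a < 0)
  obtain ⟨x₀⟩ := ‹Nonempty X›
  set x : ℕ → X := fun n => T^[n] x₀ with hxdef
  have hx : ∀ n, x (n + 1) = T (x n) := fun n => Function.iterate_succ_apply' T n x₀
  set a : ℕ → ℝ := fun n => dist (x n) (x (n + 1)) with hadef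
  have ha_nonneg : ∀ n, 0 ≤ a n := fun n => dist_nonneg
  have ha_step : ∀ n, a (n + 1) ≤ a n ∧ ψ (a (n + 1)) ≤ ψ (a n) - h (a n) := by
    intro n
    have e1 : x (n + 1) = T (x n) := hx n
    have e2 : x (n + 2) = T (T (x n)) := by rw [hx (n + 1), hx n]
    have := key (x n)
    constructor
    · simp only [hadef]; rw [e1, e2]; exact this.1
    · simp only [hadef]; rw [e1, e2]; exact this.2
  have ha_anti : Antitone a := antitone_nat_of_succ_le fun n => (ha_step n).1
  have hbdd : BddBelow (Set.range a) := ⟨0, fun y ⟨n, hn⟩ => hn ▸ ha_nonneg n⟩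
  have ha_tend : Tendsto a atTop (𝓝 (⨅ n, a n)) := tendsto_atTop_ciInf ha_anti hbdd
  set r := ⨅ n, a n with hrdef
  have hr0 : 0 ≤ r := le_ciInf ha_nonneg
  have l1 : Tendsto (fun n => ψ (a n)) atTop (𝓝 (ψ r)) := tendsto_comp_Ici hψc ha_nonneg ha_tend
  have l2 : Tendsto (fun n => ψ (a (n + 1))) atTop (𝓝 (ψ r)) := by
    have := l1.comp (tendsto_add_atTop_nat 1)
    exact this
  have l3 : Tendsto (fun n => h (a n)) atTop (𝓝 (h r)) := tendsto_comp_Ici hhc ha_nonneg ha_tend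
  have hψr : ψ r ≤ ψ r - h r := le_of_tendsto_of_tendsto' l2 (l1.sub l3) fun n => (ha_step n).2
  have hr : r = 0 := hhpos r hr0 (by linarith)
  have ha0 : Tendsto a atTop (𝓝 0) := hr ▸ ha_tend
  -- Cauchy
  have hcomp : ∀ g : ℕ → ℕ, (∀ k, k ≤ g k) → Tendsto (fun k => a (g k)) atTop (𝓝 0) := by
    intro g hg
    exact ha0.comp (tendsto_atTop_mono hg tendsto_id)
  have hcauchy : CauchySeq x := by
    rw [Metric.cauchySeq_iff]
    by_contra hc
    push_neg at hc
    obtain ⟨ε, hε, hc⟩ := hc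
    choose m' hm' n' hn' hd' using hc
    set p : ℕ → ℕ := fun k => min (m' k) (n' k) with hpdef
    set q : ℕ → ℕ := fun k => max (m' k) (n' k) with hqdef
    have hpq : ∀ k, p k < q k := by
      intro k
      have hne : m' k ≠ n' k := by
        intro hcon
        have := hd' k
        rw [hcon, dist_self] at this
        linarith
      rcases lt_or_gt_of_ne hne with hlt | hgt
      · simpa [hpdef, hqdef, min_eq_left hlt.le, max_eq_right hlt.le] using hlt
      · simpa [hpdef, hqdef, min_eq_right hgt.le, max_eq_left hgt.le] using hgt
    have hdq : ∀ k, ε ≤ dist (x (q k)) (x (p k)) := by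
      intro k
      rcases le_total (m' k) (n' k) with hle | hle
      · rw [hpdef, hqdef]; simp only [min_eq_left hle, max_eq_right hle]
        rw [dist_comm]; exact hd' k
      · rw [hpdef, hqdef]; simp only [min_eq_right hle, max_eq_left hle]
        exact hd' k
    have hkp : ∀ k, k ≤ p k := fun k => le_min (hm' k) (hn' k)
    have hset : ∀ k, ∃ j, p k < j ∧ ε ≤ dist (x j) (x (p k)) := fun k => ⟨q k, hpq k, hdq k⟩
    set m : ℕ → ℕ := fun k => Nat.find (hset k) with hmdef
    have hm1 : ∀ k, p k < m k := fun k => (Nat.find_spec (hset k)).1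
    have hm2 : ∀ k, ε ≤ dist (x (m k)) (x (p k)) := fun k => (Nat.find_spec (hset k)).2
    have hm1' : ∀ k, m k - 1 + 1 = m k := fun k =>
      Nat.succ_pred_eq_of_pos (lt_of_le_of_lt (Nat.zero_le _) (hm1 k))
    have hkm : ∀ k, k ≤ m k - 1 := fun k =>
      Nat.le_sub_one_of_lt (lt_of_le_of_lt (hkp k) (hm1 k))
    have hdless : ∀ k, dist (x (m k - 1)) (x (p k)) < ε := by
      intro k
      rcases eq_or_lt_of_le (Nat.le_sub_one_of_lt (hm1 k)) with heq | hlt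
      · rw [← heq, dist_self]; exact hε
      · have hlt2 : m k - 1 < m k := Nat.sub_lt (lt_of_le_of_lt (Nat.zero_le _) (hm1 k)) one_pos
        have := Nat.find_min (hset k) hlt2
        push_neg at this
        exact lt_of_not_ge fun hcon => absurd (this hlt) (not_lt.mpr hcon)
    set d : ℕ → ℝ := fun k => dist (x (m k)) (x (p k)) with hddef
    have hd_tend : Tendsto d atTop (𝓝 ε) := by
      have hup : ∀ k, d k ≤ ε + a (m k - 1) := by
        intro k
        have htri : dist (x (m k)) (x (p k)) ≤
            dist (x (m k)) (x (m k - 1)) + dist (x (m k - 1)) (x (p k)) := dist_triangle _ _ _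
        have : dist (x (m k)) (x (m k - 1)) = a (m k - 1) := by
          rw [hadef, dist_comm]
          simp only [hm1' k]
        rw [this] at htri
        have := (hdless k).le
        simp only [hddef]
        linarith
      have hup_t : Tendsto (fun k => ε + a (m k - 1)) atTop (𝓝 ε) := by
        have := hcomp (fun k => m k - 1) hkm
        simpa using tendsto_const_nhds.add this
      exact tendsto_of_tendsto_of_tendsto_of_le_of_le tendsto_const_nhds hup_t
        (fun k => hm2 k) hup
    have hnear : ∀ (s e : ℕ → ℝ), Tendsto e atTop (𝓝 0) →
        (∀ k, d k - e k ≤ s k) → (∀ k, s k ≤ d k + e k) → Tendsto s atTop (𝓝 ε) := by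
      intro s e he hl hu
      have h1 : Tendsto (fun k => d k - e k) atTop (𝓝 ε) := by
        simpa using hd_tend.sub he
      have h2 : Tendsto (fun k => d k + e k) atTop (𝓝 ε) := by
        simpa using hd_tend.add he
      exact tendsto_of_tendsto_of_tendsto_of_le_of_le h1 h2 hl hu
    have ham : Tendsto (fun k => a (m k)) atTop (𝓝 0) :=
      hcomp m fun k => le_trans (hkp k) (hm1 k).le
    have hap : Tendsto (fun k => a (p k)) atTop (𝓝 0) := hcomp p hkp
    have eap : ∀ k, a (p k) = dist (x (p k)) (x (p k + 1)) := fun k => rfl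
    have eam : ∀ k, a (m k) = dist (x (m k)) (x (m k + 1)) := fun k => rfl
    have ed : ∀ k, d k = dist (x (m k)) (x (p k)) := fun k => rfl
    have hu_t : Tendsto (fun k => dist (x (m k)) (x (p k + 1))) atTop (𝓝 ε) := by
      refine hnear _ (fun k => a (p k)) hap (fun k => ?_) fun k => ?_
      · have t1 := dist_triangle (x (m k)) (x (p k + 1)) (x (p k))
        have c1 : dist (x (p k + 1)) (x (p k)) = a (p k) := by rw [eap k, dist_comm]
        rw [ed k]; linarith
      · have t1 := dist_triangle (x (m k)) (x (p k)) (x (p k + 1))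
        rw [ed k]; linarith [eap k]
    have hv_t : Tendsto (fun k => dist (x (p k)) (x (m k + 1))) atTop (𝓝 ε) := by
      refine hnear _ (fun k => a (m k)) ham (fun k => ?_) fun k => ?_
      · have t1 := dist_triangle (x (m k)) (x (m k + 1)) (x (p k))
        have c1 : dist (x (m k + 1)) (x (p k)) = dist (x (p k)) (x (m k + 1)) := dist_comm _ _
        rw [ed k]; linarith [eam k]
      · have t1 := dist_triangle (x (p k)) (x (m k)) (x (m k + 1))
        have c1 : dist (x (p k)) (x (m k)) = dist (x (m k)) (x (p k)) := dist_comm _ _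
        rw [ed k]; linarith [eam k]
    have hw_t : Tendsto (fun k => dist (x (m k + 1)) (x (p k + 1))) atTop (𝓝 ε) := by
      refine hnear _ (fun k => a (m k) + a (p k)) (by simpa using ham.add hap)
        (fun k => ?_) fun k => ?_
      · have t1 := dist_triangle (x (m k)) (x (m k + 1)) (x (p k))
        have t2 := dist_triangle (x (m k + 1)) (x (p k + 1)) (x (p k))
        have c1 : dist (x (m k + 1)) (x (p k)) ≤
            dist (x (m k + 1)) (x (p k + 1)) + dist (x (p k + 1)) (x (p k)) := t2
        have c2 : dist (x (p k + 1)) (x (p k)) = a (p k) := by rw [eap k, dist_comm]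
        show dist (x (m k)) (x (p k)) - (a (m k) + a (p k)) ≤
          dist (x (m k + 1)) (x (p k + 1))
        linarith [eam k]
      · have t1 := dist_triangle (x (m k + 1)) (x (m k)) (x (p k + 1))
        have t2 := dist_triangle (x (m k)) (x (p k)) (x (p k + 1))
        have c1 : dist (x (m k + 1)) (x (m k)) = a (m k) := by rw [eam k, dist_comm]
        show dist (x (m k + 1)) (x (p k + 1)) ≤
          dist (x (m k)) (x (p k)) + (a (m k) + a (p k))
        linarith [eap k]
    -- apply contraction at (x (m k), x (p k))
    have hTk : ∀ k, ψ (dist (x (m k + 1)) (x (p k + 1))) ≤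
        ψ (max (max (d k) (a (m k))) (max (a (p k))
          ((dist (x (m k)) (x (p k + 1)) + dist (x (p k)) (x (m k + 1))) / 2))) -
        h (max (d k) (a (p k))) := by
      intro k
      have := hT (x (m k)) (x (p k))
      rw [← hx (m k), ← hx (p k)] at this
      exact this
    have hM_t : Tendsto (fun k => max (max (d k) (a (m k))) (max (a (p k))
        ((dist (x (m k)) (x (p k + 1)) + dist (x (p k)) (x (m k + 1))) / 2))) atTop
        (𝓝 ε) := by
      have := (hd_tend.max ham).max (hap.max ((hu_t.add hv_t).div_const 2))
      have heq : max (max ε 0) (max 0 ((ε + ε) / 2)) = ε := by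
        rw [max_eq_left hε.le, add_self_div_two, max_eq_right hε.le, max_self]
      rw [heq] at this
      exact this
    have hh_t : Tendsto (fun k => h (max (d k) (a (p k)))) atTop (𝓝 (h ε)) := by
      have hmax : Tendsto (fun k => max (d k) (a (p k))) atTop (𝓝 ε) := by
        have := hd_tend.max hap
        rwa [max_eq_left hε.le] at this
      exact tendsto_comp_Ici hhc (fun k => le_trans dist_nonneg (le_max_left _ _)) hmax
    have hψw_t : Tendsto (fun k => ψ (dist (x (m k + 1)) (x (p k + 1)))) atTop (𝓝 (ψ ε)) :=
      tendsto_comp_Ici hψc (fun k => dist_nonneg) hw_t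
    have hψM_t : Tendsto (fun k => ψ (max (max (d k) (a (m k))) (max (a (p k))
        ((dist (x (m k)) (x (p k + 1)) + dist (x (p k)) (x (m k + 1))) / 2)))) atTop
        (𝓝 (ψ ε)) :=
      tendsto_comp_Ici hψc (fun k => le_trans dist_nonneg
        (le_trans (le_max_left _ _) (le_max_left _ _))) hM_t
    have hfinal : ψ ε ≤ ψ ε - h ε :=
      le_of_tendsto_of_tendsto' hψw_t (hψM_t.sub hh_t) hTk
    have : ε = 0 := hhpos ε hε.le (by linarith)
    linarith
  obtain ⟨z, hz⟩ := cauchySeq_tendsto_of_complete hcauchy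
  have hxz : Tendsto (fun n => dist (x n) z) atTop (𝓝 0) := by
    have := hz.dist (tendsto_const_nhds : Tendsto (fun _ : ℕ => z) atTop (𝓝 z))
    simpa using this
  set D := dist z (T z) with hDdef
  have hD0 : 0 ≤ D := dist_nonneg
  have hfix : T z = z := by
    have hTn : ∀ n, ψ (dist (x (n + 1)) (T z)) ≤
        ψ (max (max (dist (x n) z) (a n)) (max D
          ((dist (x n) (T z) + dist z (x (n + 1))) / 2))) -
        h (max (dist (x n) z) D) := by
      intro n
      have := hT (x n) z
      rw [← hx n] at this
      exact this
    have t1 : Tendsto (fun n => dist (x n) (T z)) atTop (𝓝 D) := by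
      have := hz.dist (tendsto_const_nhds : Tendsto (fun _ : ℕ => T z) atTop (𝓝 (T z)))
      exact this
    have t2 : Tendsto (fun n => dist (x (n + 1)) (T z)) atTop (𝓝 D) :=
      t1.comp (tendsto_add_atTop_nat 1)
    have t3 : Tendsto (fun n => dist z (x (n + 1))) atTop (𝓝 0) := by
      have := (hxz.comp (tendsto_add_atTop_nat 1))
      simp only [Function.comp_def] at this ⊢
      simpa [dist_comm] using this
    have tM : Tendsto (fun n => max (max (dist (x n) z) (a n)) (max D
        ((dist (x n) (T z) + dist z (x (n + 1))) / 2))) atTop (𝓝 D) := by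
      have := (hxz.max ha0).max ((tendsto_const_nhds :
        Tendsto (fun _ : ℕ => D) atTop (𝓝 D)).max ((t1.add t3).div_const 2))
      have heq : max (max (0:ℝ) 0) (max D ((D + 0) / 2)) = D := by
        rw [max_self, add_zero, max_eq_left (by linarith : D / 2 ≤ D)]
        exact max_eq_right hD0
      rwa [heq] at this
    have th : Tendsto (fun n => h (max (dist (x n) z) D)) atTop (𝓝 (h D)) := by
      have hmax : Tendsto (fun n => max (dist (x n) z) D) atTop (𝓝 D) := by
        have := hxz.max (tendsto_const_nhds : Tendsto (fun _ : ℕ => D) atTop (𝓝 D))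
        rwa [max_eq_right hD0] at this
      exact tendsto_comp_Ici hhc (fun n => le_trans dist_nonneg (le_max_left _ _)) hmax
    have tψ1 : Tendsto (fun n => ψ (dist (x (n + 1)) (T z))) atTop (𝓝 (ψ D)) :=
      tendsto_comp_Ici hψc (fun n => dist_nonneg) t2
    have tψ2 : Tendsto (fun n => ψ (max (max (dist (x n) z) (a n)) (max D
        ((dist (x n) (T z) + dist z (x (n + 1))) / 2)))) atTop (𝓝 (ψ D)) :=
      tendsto_comp_Ici hψc (fun n => le_trans dist_nonneg
        (le_trans (le_max_left _ _) (le_max_left _ _))) tM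
    have hfinal : ψ D ≤ ψ D - h D := le_of_tendsto_of_tendsto' tψ1 (tψ2.sub th) hTn
    have : D = 0 := hhpos D hD0 (by linarith)
    rw [hDdef] at this
    exact (dist_eq_zero.mp this).symm
  refine ⟨z, hfix, fun y hy => ?_⟩
  have := hT y z
  rw [hy, hfix] at this
  rw [dist_self, dist_self] at this
  have e1 : max (max (dist y z) 0) (max 0 ((dist y z + dist z y) / 2)) = dist y z := by
    rw [dist_comm z y, add_self_div_two, max_eq_left dist_nonneg, max_eq_right dist_nonneg,
      max_self]
  have e2 : max (dist y z) 0 = dist y z := max_eq_left dist_nonneg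
  rw [e1, e2] at this
  have : dist y z = 0 := hhpos _ dist_nonneg (by linarith)
  exact dist_eq_zero.mp this
end

section
/- Let (X,d) be a complete metric space and T : X → X satisfy ψ(d(Tx,Ty)) ≤ a·ψ(d(x,y)) + b·ψ(m(x,y)) for all x, y ∈ X, where a, b > 0, a + b < 1, m(x,y) = d(y,Ty)·(1 + d(x,Tx))/(1 + d(x,y)), and ψ is an altering distance function. Then T has a unique fixed point p ∈ X, and T^n x → p for every x ∈ X. -/
open Filter

theorem stmt9_orbit {X : Type*} [MetricSpace X] [CompleteSpace X]
    (a b : ℝ) (ha : 0 < a) (hb : 0 < b) (hab : a + b < 1)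
    (ψ : ℝ → ℝ)
    (hψc : ContinuousOn ψ (Set.Ici 0)) (hψm : MonotoneOn ψ (Set.Ici 0))
    (hψnn : ∀ t, 0 ≤ t → 0 ≤ ψ t) (hψ0 : ∀ t, 0 ≤ t → (ψ t = 0 ↔ t = 0))
    (T : X → X)
    (hT : ∀ x y : X,
      ψ (dist (T x) (T y)) ≤ a * ψ (dist x y) +
        b * ψ (dist y (T y) * (1 + dist x (T x)) / (1 + dist x y)))
    (x : X) :
    ∃ p : X, T p = p ∧ Tendsto (fun n => T^[n] x) atTop (nhds p) := by
  -- composition helper for continuity of ψ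
  have hcomp : ∀ {ι : Type} {f : ι → ℝ} {l : Filter ι} {t : ℝ}, 0 ≤ t →
      Tendsto f l (nhds t) → (∀ᶠ z in l, 0 ≤ f z) →
      Tendsto (fun z => ψ (f z)) l (nhds (ψ t)) := by
    intro ι f l t ht hf hf0
    exact (hψc t ht).tendsto.comp
      (tendsto_nhdsWithin_of_tendsto_nhds_of_eventually_within f hf hf0)
  -- ψ reflects strict inequalities on nonneg reals
  have hlt : ∀ s t : ℝ, 0 ≤ s → 0 ≤ t → ψ s < ψ t → s < t := by
    intro s t hs ht h
    by_contra hc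
    exact absurd (hψm ht hs (not_lt.1 hc)) (not_le.2 h)
  have hψpos : ∀ t : ℝ, 0 < t → 0 < ψ t := by
    intro t ht
    rcases lt_or_eq_of_le (hψnn t ht.le) with h | h
    · exact h
    · exact absurd ((hψ0 t ht.le).1 h.symm) (by positivity)
  have hψzero : ψ 0 = 0 := (hψ0 0 le_rfl).2 rfl
  set u : ℕ → X := fun n => T^[n] x with hu_def
  have hu : ∀ n, u (n + 1) = T (u n) := fun n => Function.iterate_succ_apply' T n x
  set d : ℕ → ℝ := fun n => dist (u n) (u (n + 1)) with hd_def
  have hd0 : ∀ n, 0 ≤ d n := fun n => dist_nonneg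
  set c : ℝ := a / (1 - b) with hc_def
  have hb1 : 0 < 1 - b := by linarith
  have hc0 : 0 ≤ c := by positivity
  have hc1 : c < 1 := (div_lt_one hb1).2 (by linarith)
  -- Step 1: ψ (d (n+1)) ≤ c * ψ (d n)
  have hstep : ∀ n, ψ (d (n + 1)) ≤ c * ψ (d n) := by
    intro n
    have h := hT (u n) (u (n + 1))
    rw [← hu n, ← hu (n + 1)] at h
    have hsimp : dist (u (n + 1)) (u (n + 2)) * (1 + dist (u n) (u (n + 1))) /
        (1 + dist (u n) (u (n + 1))) = d (n + 1) := by
      rw [mul_div_assoc, div_self (by positivity), mul_one]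
    rw [hsimp] at h
    have : (1 - b) * ψ (d (n + 1)) ≤ a * ψ (d n) := by
      have : ψ (d (n + 1)) ≤ a * ψ (d n) + b * ψ (d (n + 1)) := h
      linarith
    rw [hc_def, div_mul_eq_mul_div, le_div_iff₀ hb1]
    linarith [this]
  -- Step 2: geometric bound
  have hgeo : ∀ n, ψ (d n) ≤ c ^ n * ψ (d 0) := by
    intro n
    induction n with
    | zero => simp
    | succ n ih =>
      calc ψ (d (n + 1)) ≤ c * ψ (d n) := hstep n
        _ ≤ c * (c ^ n * ψ (d 0)) := by
            exact mul_le_mul_of_nonneg_left ih hc0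
        _ = c ^ (n + 1) * ψ (d 0) := by ring
  -- Step 3: d n gets small
  have hsmall : ∀ δ : ℝ, 0 < δ → ∃ N, ∀ n ≥ N, d n < δ := by
    intro δ hδ
    have hψδ : 0 < ψ δ := hψpos δ hδ
    have htend : Tendsto (fun n => c ^ n * ψ (d 0)) atTop (nhds 0) := by
      simpa using (tendsto_pow_atTop_nhds_zero_of_lt_one hc0 hc1).mul_const (ψ (d 0))
    have hev : ∀ᶠ n in atTop, c ^ n * ψ (d 0) < ψ δ :=
      htend.eventually_lt_const hψδ
    rcases eventually_atTop.1 hev with ⟨N, hN⟩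
    refine ⟨N, fun n hn => ?_⟩
    exact hlt _ _ (hd0 n) hδ.le (lt_of_le_of_lt (hgeo n) (hN n hn))
  -- d n → 0
  have hdtend : Tendsto d atTop (nhds 0) := by
    rw [Metric.tendsto_atTop]
    intro ε hε
    rcases hsmall ε hε with ⟨N, hN⟩
    exact ⟨N, fun n hn => by
      rw [Real.dist_eq, sub_zero, abs_of_nonneg (hd0 n)]; exact hN n hn⟩
  -- Step 4: Cauchy
  have hcauchy : CauchySeq u := by
    rw [Metric.cauchySeq_iff]
    intro ε hε
    set ε' : ℝ := ε / 4 with hε'_def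
    have hε' : 0 < ε' := by positivity
    have hψε' : 0 < ψ ε' := hψpos ε' hε'
    -- choose δ
    obtain ⟨δ, hδmem, hδsmall, hδkey⟩ :
        ∃ δ : ℝ, δ ∈ Set.Ioi (0:ℝ) ∧ (δ < min 1 ε') ∧
          a * ψ (ε' + δ) + b * ψ (2 * δ) < ψ ε' := by
      have hF : Tendsto (fun δ : ℝ => a * ψ (ε' + δ) + b * ψ (2 * δ))
          (nhdsWithin 0 (Set.Ioi 0)) (nhds (a * ψ ε' + b * ψ 0)) := by
        have h1 : Tendsto (fun δ : ℝ => ψ (ε' + δ)) (nhdsWithin 0 (Set.Ioi 0)) (nhds (ψ ε')) := by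
          refine hcomp hε'.le ?_ ?_
          · have : Tendsto (fun δ : ℝ => ε' + δ) (nhds 0) (nhds ε') := by
              simpa using (tendsto_const_nhds.add tendsto_id : Tendsto (fun δ : ℝ => ε' + δ) (nhds 0) (nhds (ε' + 0)))
            exact this.mono_left nhdsWithin_le_nhds
          · filter_upwards [self_mem_nhdsWithin] with z hz
            have : (0:ℝ) < z := hz
            linarith
        have h2 : Tendsto (fun δ : ℝ => ψ (2 * δ)) (nhdsWithin 0 (Set.Ioi 0)) (nhds (ψ 0)) := by
          refine hcomp le_rfl ?_ ?_
          · have : Tendsto (fun δ : ℝ => 2 * δ) (nhds 0) (nhds 0) := by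
              simpa using (tendsto_const_nhds.mul tendsto_id : Tendsto (fun δ : ℝ => 2 * δ) (nhds 0) (nhds (2 * 0)))
            exact this.mono_left nhdsWithin_le_nhds
          · filter_upwards [self_mem_nhdsWithin] with z hz
            have : (0:ℝ) < z := hz
            linarith
        exact (h1.const_mul a).add (h2.const_mul b)
      have hlt0 : a * ψ ε' + b * ψ 0 < ψ ε' := by
        rw [hψzero]; nlinarith
      have hev1 : ∀ᶠ δ in nhdsWithin (0:ℝ) (Set.Ioi 0),
          a * ψ (ε' + δ) + b * ψ (2 * δ) < ψ ε' := hF.eventually_lt_const hlt0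
      have hev2 : ∀ᶠ δ in nhdsWithin (0:ℝ) (Set.Ioi 0), δ < min 1 ε' := by
        apply eventually_nhdsWithin_of_eventually_nhds
        exact (tendsto_id.eventually_lt_const (by positivity))
      rcases (hev1.and (hev2.and self_mem_nhdsWithin)).exists with ⟨δ, h1, h2, h3⟩
      exact ⟨δ, h3, h2, h1⟩
    have hδ0 : 0 < δ := hδmem
    have hδ1 : δ ≤ 1 := le_of_lt (lt_of_lt_of_le hδsmall (min_le_left _ _))
    have hδε' : δ < ε' := lt_of_lt_of_le hδsmall (min_le_right _ _)
    rcases hsmall δ hδ0 with ⟨N, hN⟩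
    -- main induction
    have claim : ∀ m, N ≤ m → dist (u N) (u m) < ε' + δ := by
      intro m hm
      induction m, hm using Nat.le_induction with
      | base => simpa using by positivity
      | succ m hm ih =>
        have hDnn : (0:ℝ) ≤ dist (u N) (u m) := dist_nonneg
        have hq : dist (u m) (T (u m)) * (1 + dist (u N) (T (u N))) /
            (1 + dist (u N) (u m)) ≤ 2 * δ := by
          rw [← hu m, ← hu N]
          have hnum : dist (u m) (u (m + 1)) * (1 + dist (u N) (u (N + 1))) ≤ δ * 2 := by
            have h1 : d m < δ := hN m hm
            have h2 : d N < δ := hN N le_rfl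
            nlinarith [hd0 m, hd0 N]
          calc dist (u m) (u (m + 1)) * (1 + dist (u N) (u (N + 1))) /
              (1 + dist (u N) (u m))
              ≤ dist (u m) (u (m + 1)) * (1 + dist (u N) (u (N + 1))) := by
                apply div_le_self (by positivity) (by linarith)
            _ ≤ 2 * δ := by linarith
        have hmain : ψ (dist (u (N + 1)) (u (m + 1))) < ψ ε' := by
          rw [hu N, hu m]
          calc ψ (dist (T (u N)) (T (u m)))
              ≤ a * ψ (dist (u N) (u m)) + b * ψ (dist (u m) (T (u m)) *
                (1 + dist (u N) (T (u N))) / (1 + dist (u N) (u m))) := hT (u N) (u m)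
            _ ≤ a * ψ (ε' + δ) + b * ψ (2 * δ) := by
                have m1 : ψ (dist (u N) (u m)) ≤ ψ (ε' + δ) :=
                  hψm (Set.mem_Ici.2 hDnn) (Set.mem_Ici.2 (by linarith)) ih.le
                have m2 : ψ (dist (u m) (T (u m)) * (1 + dist (u N) (T (u N))) /
                    (1 + dist (u N) (u m))) ≤ ψ (2 * δ) := by
                  apply hψm (Set.mem_Ici.2 (by positivity)) (Set.mem_Ici.2 (by positivity)) hq
                nlinarith
            _ < ψ ε' := hδkey
        have h2 : dist (u (N + 1)) (u (m + 1)) < ε' :=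
          hlt _ _ dist_nonneg hε'.le hmain
        calc dist (u N) (u (m + 1)) ≤ dist (u N) (u (N + 1)) + dist (u (N + 1)) (u (m + 1)) :=
              dist_triangle _ _ _
          _ < δ + ε' := by
              have : d N < δ := hN N le_rfl
              have := hd0 N
              linarith
          _ = ε' + δ := by ring
    refine ⟨N, fun m hm n hn => ?_⟩
    calc dist (u m) (u n) ≤ dist (u m) (u N) + dist (u N) (u n) := dist_triangle _ _ _
      _ = dist (u N) (u m) + dist (u N) (u n) := by rw [dist_comm]
      _ < (ε' + δ) + (ε' + δ) := add_lt_add (claim m hm) (claim n hn)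
      _ ≤ ε := by rw [hε'_def] at *; linarith
  -- limit point
  obtain ⟨p, hp⟩ := cauchySeq_tendsto_of_complete hcauchy
  refine ⟨p, ?_, hp⟩
  -- fixed point
  set c0 : ℝ := dist p (T p) with hc0_def
  have hc0nn : 0 ≤ c0 := dist_nonneg
  have hup : Tendsto (fun n => dist (u n) p) atTop (nhds 0) := by
    simpa using hp.dist (tendsto_const_nhds (x := p))
  have hLHS : Tendsto (fun n => ψ (dist (u (n + 1)) (T p))) atTop (nhds (ψ c0)) := by
    refine hcomp hc0nn ?_ (Eventually.of_forall fun n => dist_nonneg)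
    have h1 : Tendsto (fun n => u (n + 1)) atTop (nhds p) :=
      hp.comp (tendsto_add_atTop_nat 1)
    simpa [hc0_def] using h1.dist (tendsto_const_nhds (x := T p))
  have hRHS : Tendsto (fun n => a * ψ (dist (u n) p) +
      b * ψ (c0 * (1 + d n) / (1 + dist (u n) p))) atTop
      (nhds (a * ψ 0 + b * ψ c0)) := by
    have h1 : Tendsto (fun n => ψ (dist (u n) p)) atTop (nhds (ψ 0)) :=
      hcomp le_rfl hup (Eventually.of_forall fun n => dist_nonneg)
    have h2 : Tendsto (fun n => ψ (c0 * (1 + d n) / (1 + dist (u n) p))) atTop (nhds (ψ c0)) := by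
      refine hcomp hc0nn ?_ (Eventually.of_forall fun n => by positivity)
      have hnum : Tendsto (fun n => c0 * (1 + d n)) atTop (nhds c0) := by
        have := (tendsto_const_nhds (x := c0) (f := atTop (α := ℕ))).mul
          ((tendsto_const_nhds (x := (1:ℝ))).add hdtend)
        simpa using this
      have hden : Tendsto (fun n => 1 + dist (u n) p) atTop (nhds 1) := by
        simpa using (tendsto_const_nhds (x := (1:ℝ)) (f := atTop (α := ℕ))).add hup
      have h := (hnum.div hden one_ne_zero : Tendsto (fun n => c0 * (1 + d n) / (1 + dist (u n) p)) atTop (nhds (c0 / 1)))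
      rw [div_one] at h; exact h
    exact (h1.const_mul a).add (h2.const_mul b)
  have hineq : ψ c0 ≤ a * ψ 0 + b * ψ c0 := by
    refine le_of_tendsto_of_tendsto' hLHS hRHS fun n => ?_
    have h := hT (u n) p
    rw [← hu n] at h
    simpa [hc0_def, hd_def, hu n] using h
  have : ψ c0 = 0 := by
    rw [hψzero] at hineq
    have := hψnn c0 hc0nn
    nlinarith
  have : c0 = 0 := (hψ0 c0 hc0nn).1 this
  exact (dist_eq_zero.1 this).symm

theorem stmt_9 {X : Type*} [MetricSpace X] [CompleteSpace X] [Nonempty X]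
    (a b : ℝ) (ha : 0 < a) (hb : 0 < b) (hab : a + b < 1)
    (ψ : ℝ → ℝ)
    (hψc : ContinuousOn ψ (Set.Ici 0)) (hψm : MonotoneOn ψ (Set.Ici 0))
    (hψnn : ∀ t, 0 ≤ t → 0 ≤ ψ t) (hψ0 : ∀ t, 0 ≤ t → (ψ t = 0 ↔ t = 0))
    (T : X → X)
    (hT : ∀ x y : X,
      ψ (dist (T x) (T y)) ≤ a * ψ (dist x y) +
        b * ψ (dist y (T y) * (1 + dist x (T x)) / (1 + dist x y))) :
    ∃ p : X, T p = p ∧ (∀ q : X, T q = q → q = p) ∧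
      ∀ x : X, Tendsto (fun n => T^[n] x) atTop (nhds p) := by
  obtain ⟨p, hpfix, hptend⟩ := stmt9_orbit a b ha hb hab ψ hψc hψm hψnn hψ0 T hT
    (Classical.arbitrary X)
  have huniq : ∀ q : X, T q = q → q = p := by
    intro q hq
    have h := hT p q
    rw [hpfix, hq] at h
    have hsimp : dist q q * (1 + dist p p) / (1 + dist p q) = 0 := by simp
    rw [hsimp, (hψ0 0 le_rfl).2 rfl] at h
    have hnn := hψnn (dist p q) dist_nonneg
    have : ψ (dist p q) = 0 := by nlinarith
    have : dist p q = 0 := (hψ0 _ dist_nonneg).1 this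
    exact (dist_eq_zero.1 this).symm
  refine ⟨p, hpfix, huniq, fun x => ?_⟩
  obtain ⟨q, hqfix, hqtend⟩ := stmt9_orbit a b ha hb hab ψ hψc hψm hψnn hψ0 T hT x
  rwa [huniq q hqfix] at hqtend
end

section
/- Let (X,d) be a complete metric space, k ∈ [0,1), and T : X → X a mapping satisfying ψ(d(Tx,Ty)) ≤ k·ψ(M(x,y)) for all x, y ∈ X, where M(x,y) = max{d(x,y), d(x,Tx), d(y,Ty), (d(x,Ty)+d(y,Tx))/2} and ψ is an altering distance function. Then T has a unique fixed point. -/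
open Filter Topology

theorem stmt_11 {X : Type*} [MetricSpace X] [CompleteSpace X] [Nonempty X]
    (k : ℝ) (hk : k ∈ Set.Ico (0:ℝ) 1)
    (ψ : ℝ → ℝ)
    (hψc : ContinuousOn ψ (Set.Ici 0)) (hψm : MonotoneOn ψ (Set.Ici 0))
    (hψnn : ∀ t, 0 ≤ t → 0 ≤ ψ t) (hψ0 : ∀ t, 0 ≤ t → (ψ t = 0 ↔ t = 0))
    (T : X → X)
    (hT : ∀ x y : X,
      ψ (dist (T x) (T y)) ≤
        k * ψ (max (max (dist x y) (dist x (T x)))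
            (max (dist y (T y)) ((dist x (T y) + dist y (T x)) / 2)))) :
    ∃! a : X, T a = a := by
  obtain ⟨x0⟩ := ‹Nonempty X›
  obtain ⟨hk0, hk1⟩ := hk
  -- helper facts about ψ
  have hmono : ∀ {s t : ℝ}, 0 ≤ s → s ≤ t → ψ s ≤ ψ t := by
    intro s t hs hst
    exact hψm hs (le_trans hs hst) hst
  have hzero : ∀ t, 0 ≤ t → ψ t ≤ k * ψ t → t = 0 := by
    intro t ht h
    have h2 : ψ t ≤ 0 := by nlinarith [hψnn t ht]
    exact (hψ0 t ht).mp (le_antisymm h2 (hψnn t ht))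
  have hpsi_lim : ∀ (a : ℕ → ℝ) (t : ℝ), 0 ≤ t → (∀ j, 0 ≤ a j) →
      Tendsto a atTop (𝓝 t) → Tendsto (fun j => ψ (a j)) atTop (𝓝 (ψ t)) := by
    intro a t ht ha hlim
    exact (hψc t ht).tendsto.comp
      (tendsto_nhdsWithin_iff.mpr ⟨hlim, Eventually.of_forall ha⟩)
  -- the Picard iterates
  set u : ℕ → X := fun n => T^[n] x0 with hu
  have hu_succ : ∀ n, u (n + 1) = T (u n) := fun n => Function.iterate_succ_apply' T n x0
  set d : ℕ → ℝ := fun n => dist (u n) (u (n + 1)) with hd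
  have hdnn : ∀ n, 0 ≤ d n := fun n => dist_nonneg
  -- one-step estimate
  have hstep : ∀ n, d (n + 1) ≤ d n ∧ ψ (d (n + 1)) ≤ k * ψ (d n) := by
    intro n
    have h := hT (u n) (u (n + 1))
    rw [← hu_succ n, ← hu_succ (n + 1)] at h
    simp only [dist_self, max_self, add_zero] at h
    have hc : dist (u n) (u (n + 1 + 1)) ≤ d n + d (n + 1) := dist_triangle _ (u (n + 1)) _
    have hMnn : (0:ℝ) ≤ max (d n) (max (d (n + 1)) (dist (u n) (u (n + 1 + 1)) / 2)) :=
      le_max_of_le_left (hdnn n)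
    have hb : d (n + 1) ≤ d n := by
      by_contra hba
      push_neg at hba
      have hM : max (d n) (max (d (n + 1)) (dist (u n) (u (n + 1 + 1)) / 2)) ≤ d (n + 1) :=
        max_le hba.le (max_le le_rfl (by linarith))
      have h2 : ψ (d (n + 1)) ≤ k * ψ (d (n + 1)) :=
        le_trans h (mul_le_mul_of_nonneg_left (hmono hMnn hM) hk0)
      have := hzero _ (hdnn (n + 1)) h2
      have := hdnn n
      linarith
    have hM : max (d n) (max (d (n + 1)) (dist (u n) (u (n + 1 + 1)) / 2)) ≤ d n :=
      max_le le_rfl (max_le hb (by linarith))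
    exact ⟨hb, le_trans h (mul_le_mul_of_nonneg_left (hmono hMnn hM) hk0)⟩
  have hgeo : ∀ n, ψ (d n) ≤ k ^ n * ψ (d 0) := by
    intro n
    induction n with
    | zero => simp
    | succ n ih =>
      calc ψ (d (n + 1)) ≤ k * ψ (d n) := (hstep n).2
        _ ≤ k * (k ^ n * ψ (d 0)) := mul_le_mul_of_nonneg_left ih hk0
        _ = k ^ (n + 1) * ψ (d 0) := by ring
  have hanti : Antitone d := antitone_nat_of_succ_le fun n => (hstep n).1
  have hd0 : Tendsto d atTop (𝓝 0) := by
    have hbdd : BddBelow (Set.range d) := ⟨0, by rintro x ⟨n, rfl⟩; exact hdnn n⟩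
    have hL : Tendsto d atTop (𝓝 (⨅ n, d n)) := tendsto_atTop_ciInf hanti hbdd
    have hL0 : (0:ℝ) ≤ ⨅ n, d n := le_ciInf hdnn
    have h1 : Tendsto (fun n => ψ (d n)) atTop (𝓝 (ψ (⨅ n, d n))) :=
      hpsi_lim d _ hL0 hdnn hL
    have h2 : Tendsto (fun n => k ^ n * ψ (d 0)) atTop (𝓝 0) := by
      simpa using (tendsto_pow_atTop_nhds_zero_of_lt_one hk0 hk1).mul_const (ψ (d 0))
    have h3 : ψ (⨅ n, d n) ≤ 0 := le_of_tendsto_of_tendsto' h1 h2 hgeo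
    have h4 : (⨅ n, d n) = 0 :=
      (hψ0 _ hL0).mp (le_antisymm h3 (hψnn _ hL0))
    rwa [h4] at hL
  have hcauchy : CauchySeq u := by
    by_contra hC
    rw [Metric.cauchySeq_iff] at hC
    push_neg at hC
    obtain ⟨ε, hε, hC⟩ := hC
    -- for each j, find p ≥ j and the least q > p with ε ≤ dist (u p) (u q)
    have hkey : ∀ j : ℕ, ∃ p q : ℕ, j ≤ p ∧ p < q ∧ ε ≤ dist (u p) (u q) ∧
        dist (u p) (u (q - 1)) < ε := by
      intro j
      obtain ⟨a, ha, b, hb, hab⟩ := hC j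
      have hne : a ≠ b := by
        intro hEq; rw [hEq, dist_self] at hab; linarith
      have hex : ∃ q, min a b < q ∧ ε ≤ dist (u (min a b)) (u q) := by
        refine ⟨max a b, ?_, ?_⟩
        · rcases hne.lt_or_gt with h | h
          · rw [min_eq_left h.le, max_eq_right h.le]; exact h
          · rw [min_eq_right h.le, max_eq_left h.le]; exact h
        · rcases le_total a b with h | h
          · rwa [min_eq_left h, max_eq_right h]
          · rw [min_eq_right h, max_eq_left h, dist_comm]; exact hab
      refine ⟨min a b, Nat.find hex, le_min ha hb, (Nat.find_spec hex).1,
        (Nat.find_spec hex).2, ?_⟩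
      rcases eq_or_lt_of_le (Nat.succ_le_of_lt (Nat.find_spec hex).1) with h | h
      · rw [← h]; simpa using hε
      · have h1 : Nat.find hex - 1 < Nat.find hex := by omega
        have h2 := Nat.find_min hex h1
        push_neg at h2
        exact h2 (by omega)
    choose p q hjp hpq hge hlt using hkey
    -- auxiliary limits
    have hp_top : Tendsto p atTop atTop := tendsto_atTop_mono hjp tendsto_id
    have hq_top : Tendsto (fun j => q j - 1) atTop atTop :=
      tendsto_atTop_mono (fun j => (hjp j).trans (Nat.le_pred_of_lt (hpq j))) tendsto_id
    have hdp : Tendsto (fun j => d (p j)) atTop (𝓝 0) := hd0.comp hp_top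
    have hdq1 : Tendsto (fun j => d (q j - 1)) atTop (𝓝 0) := hd0.comp hq_top
    have hdq : Tendsto (fun j => d (q j)) atTop (𝓝 0) :=
      hd0.comp (tendsto_atTop_mono (fun j => (hjp j).trans (hpq j).le) tendsto_id)
    have hq1 : ∀ j, q j - 1 + 1 = q j := fun j => by have := hpq j; omega
    -- A j := dist (u (p j)) (u (q j)) tends to ε
    set A : ℕ → ℝ := fun j => dist (u (p j)) (u (q j)) with hA
    have hAub : ∀ j, A j ≤ ε + d (q j - 1) := by
      intro j
      have h1 : A j ≤ dist (u (p j)) (u (q j - 1)) + dist (u (q j - 1)) (u (q j)) := by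
        rw [hA]; exact dist_triangle _ _ _
      have h2 : dist (u (q j - 1)) (u (q j)) = d (q j - 1) := by
        simp only [hd]; rw [hq1 j]
      rw [h2] at h1
      have := hlt j
      linarith
    have hAlim : Tendsto A atTop (𝓝 ε) := by
      refine tendsto_of_tendsto_of_tendsto_of_le_of_le tendsto_const_nhds ?_ hge hAub
      simpa using (tendsto_const_nhds (x := ε) (f := atTop (α := ℕ))).add hdq1
    -- B j := dist (u (p j + 1)) (u (q j + 1)) tends to ε
    set B : ℕ → ℝ := fun j => dist (u (p j + 1)) (u (q j + 1)) with hB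
    have hBbound : ∀ j, A j - d (p j) - d (q j) ≤ B j ∧ B j ≤ A j + d (p j) + d (q j) := by
      intro j
      constructor
      · have h1 : A j ≤ d (p j) + B j + d (q j) := by
          calc A j ≤ dist (u (p j)) (u (p j + 1)) + dist (u (p j + 1)) (u (q j)) :=
                dist_triangle _ _ _
            _ ≤ dist (u (p j)) (u (p j + 1)) +
                (dist (u (p j + 1)) (u (q j + 1)) + dist (u (q j + 1)) (u (q j))) := by
                linarith [dist_triangle (u (p j + 1)) (u (q j + 1)) (u (q j))]
            _ = d (p j) + B j + d (q j) := by rw [dist_comm (u (q j + 1)) (u (q j))]; ring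
        linarith
      · calc B j ≤ dist (u (p j + 1)) (u (p j)) + dist (u (p j)) (u (q j + 1)) :=
              dist_triangle _ _ _
          _ ≤ dist (u (p j + 1)) (u (p j)) +
              (dist (u (p j)) (u (q j)) + dist (u (q j)) (u (q j + 1))) := by
              linarith [dist_triangle (u (p j)) (u (q j)) (u (q j + 1))]
          _ = A j + d (p j) + d (q j) := by rw [dist_comm (u (p j + 1)) (u (p j))]; ring
    have hBlim : Tendsto B atTop (𝓝 ε) := by
      have hg : Tendsto (fun j => A j - d (p j) - d (q j)) atTop (𝓝 ε) := by
        simpa using (hAlim.sub hdp).sub hdq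
      have hh : Tendsto (fun j => A j + d (p j) + d (q j)) atTop (𝓝 ε) := by
        simpa using (hAlim.add hdp).add hdq
      exact tendsto_of_tendsto_of_tendsto_of_le_of_le hg hh
        (fun j => (hBbound j).1) (fun j => (hBbound j).2)
    -- C j := dist (u (p j)) (u (q j + 1)) tends to ε
    set C : ℕ → ℝ := fun j => dist (u (p j)) (u (q j + 1)) with hC2
    have hClim : Tendsto C atTop (𝓝 ε) := by
      have hg : Tendsto (fun j => A j - d (q j)) atTop (𝓝 ε) := by
        simpa using hAlim.sub hdq
      have hh : Tendsto (fun j => A j + d (q j)) atTop (𝓝 ε) := by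
        simpa using hAlim.add hdq
      refine tendsto_of_tendsto_of_tendsto_of_le_of_le hg hh ?_ ?_
      · intro j
        have h1 := dist_triangle (u (p j)) (u (q j + 1)) (u (q j))
        have h2 : dist (u (q j + 1)) (u (q j)) = d (q j) := dist_comm _ _
        simp only [hA, hC2]
        linarith
      · intro j
        simp only [hA, hC2]
        have h1 := dist_triangle (u (p j)) (u (q j)) (u (q j + 1))
        linarith
    -- D j := dist (u (q j)) (u (p j + 1)) tends to ε
    set D : ℕ → ℝ := fun j => dist (u (q j)) (u (p j + 1)) with hD
    have hDlim : Tendsto D atTop (𝓝 ε) := by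
      have hg : Tendsto (fun j => A j - d (p j)) atTop (𝓝 ε) := by
        simpa using hAlim.sub hdp
      have hh : Tendsto (fun j => A j + d (p j)) atTop (𝓝 ε) := by
        simpa using hAlim.add hdp
      refine tendsto_of_tendsto_of_tendsto_of_le_of_le hg hh ?_ ?_
      · intro j
        simp only [hA, hD]
        have h1 := dist_triangle (u (p j)) (u (p j + 1)) (u (q j))
        have h2 := dist_comm (u (p j + 1)) (u (q j))
        have h3 := dist_comm (u (q j)) (u (p j + 1))
        rw [dist_comm (u (q j)) (u (p j + 1))]
        linarith
      · intro j
        simp only [hA, hD]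
        rw [dist_comm (u (q j)) (u (p j + 1))]
        have h1 := dist_triangle (u (p j + 1)) (u (p j)) (u (q j))
        have h2 := dist_comm (u (p j + 1)) (u (p j))
        linarith
    -- M j tends to ε
    set M : ℕ → ℝ := fun j => max (max (A j) (d (p j))) (max (d (q j)) ((C j + D j) / 2))
      with hM
    have hMlim : Tendsto M atTop (𝓝 ε) := by
      have h1 : Tendsto M atTop (𝓝 (max (max ε 0) (max 0 ((ε + ε) / 2)))) :=
        (hAlim.max hdp).max (hdq.max ((hClim.add hDlim).div_const 2))
      have h2 : max (max ε 0) (max 0 ((ε + ε) / 2)) = ε := by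
        rw [max_eq_left hε.le]
        have : (ε + ε) / 2 = ε := by ring
        rw [this, max_eq_right hε.le, max_self]
      rwa [h2] at h1
    -- the contraction inequality along the subsequences
    have hineq : ∀ j, ψ (B j) ≤ k * ψ (M j) := by
      intro j
      have h := hT (u (p j)) (u (q j))
      rw [← hu_succ (p j), ← hu_succ (q j)] at h
      exact h
    have hMnn : ∀ j, 0 ≤ M j := fun j =>
      le_max_of_le_left (le_max_of_le_left dist_nonneg)
    have hBnn : ∀ j, 0 ≤ B j := fun j => dist_nonneg
    have hfin : ψ ε ≤ k * ψ ε :=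
      le_of_tendsto_of_tendsto' (hpsi_lim B ε hε.le hBnn hBlim)
        ((hpsi_lim M ε hε.le hMnn hMlim).const_mul k) hineq
    have := hzero ε hε.le hfin
    linarith
  obtain ⟨a, hconv⟩ := cauchySeq_tendsto_of_complete hcauchy
  have hconv1 : Tendsto (fun j => u (j + 1)) atTop (𝓝 a) :=
    hconv.comp (tendsto_add_atTop_nat 1)
  have hfix : T a = a := by
    set c := dist a (T a) with hc
    have hcnn : 0 ≤ c := dist_nonneg
    -- sequences appearing in M(a, u j)
    have h1 : Tendsto (fun j => dist a (u j)) atTop (𝓝 0) := by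
      simpa using (tendsto_const_nhds (x := a) (f := atTop (α := ℕ))).dist hconv
    have h2 : Tendsto (fun j => dist a (u (j + 1))) atTop (𝓝 0) := by
      simpa using (tendsto_const_nhds (x := a) (f := atTop (α := ℕ))).dist hconv1
    have h3 : Tendsto (fun j => dist (u j) (T a)) atTop (𝓝 c) := by
      have := hconv.dist (tendsto_const_nhds (x := T a) (f := atTop (α := ℕ)))
      simpa [hc] using this
    set M : ℕ → ℝ := fun j => max (max (dist a (u j)) (dist a (T a)))
      (max (d j) ((dist a (u (j + 1)) + dist (u j) (T a)) / 2)) with hM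
    have hMlim : Tendsto M atTop (𝓝 c) := by
      have h4 : Tendsto M atTop (𝓝 (max (max 0 c) (max 0 ((0 + c) / 2)))) :=
        (h1.max ((tendsto_const_nhds).congr (fun j => rfl))).max
          (hd0.max ((h2.add h3).div_const 2))
      have h5 : max (max 0 c) (max 0 ((0 + c) / 2)) = c := by
        rw [zero_add, max_eq_right hcnn, max_eq_right (by linarith : (0:ℝ) ≤ c / 2),
          max_eq_left (by linarith)]
      rwa [h5] at h4
    have hineq : ∀ j, ψ (dist (T a) (u (j + 1))) ≤ k * ψ (M j) := by
      intro j
      have h := hT a (u j)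
      rw [← hu_succ j] at h
      exact h
    have hBlim : Tendsto (fun j => dist (T a) (u (j + 1))) atTop (𝓝 (dist (T a) a)) :=
      tendsto_const_nhds.dist hconv1
    have hMnn : ∀ j, 0 ≤ M j := fun j =>
      le_max_of_le_left (le_max_of_le_left dist_nonneg)
    have hfin : ψ (dist (T a) a) ≤ k * ψ c :=
      le_of_tendsto_of_tendsto'
        (hpsi_lim _ _ dist_nonneg (fun j => dist_nonneg) hBlim)
        ((hpsi_lim M c hcnn hMnn hMlim).const_mul k) hineq
    rw [hc, dist_comm a (T a)] at hfin
    exact eq_of_dist_eq_zero (hzero _ dist_nonneg hfin)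
  refine ⟨a, hfix, fun b hb => ?_⟩
  have h := hT b a
  rw [hb, hfix, dist_self, dist_self] at h
  have hE : max (max (dist b a) 0) (max 0 ((dist b a + dist a b) / 2)) = dist b a := by
    rw [dist_comm a b]
    have : (dist b a + dist b a) / 2 = dist b a := by ring
    rw [this, max_eq_right dist_nonneg, max_eq_left dist_nonneg, max_self]
  rw [hE] at h
  exact eq_of_dist_eq_zero (hzero _ dist_nonneg h)
end

section
/- Let (X,d) be a metric space, T : X → X, α ∈ (0, 1/2], and let {x_n} be the orbit x_{n+1} = T x_n of a point x_0. Then for every n and every y ∈ X, at least one of α·d(x_n, T x_n) ≤ d(x_n, y) or α·d(x_{n+1}, T x_{n+1}) ≤ d(x_{n+1}, y) holds, provided d(x_{n+1}, x_{n+2}) ≤ d(x_n, x_{n+1}). -/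
theorem stmt_14 {X : Type*} [MetricSpace X] (T : X → X)
    (α : ℝ) (hα : α ∈ Set.Ioc (0:ℝ) (1/2))
    (x : ℕ → X) (hx : ∀ n, x (n + 1) = T (x n))
    (n : ℕ) (hdec : dist (x (n + 1)) (x (n + 2)) ≤ dist (x n) (x (n + 1)))
    (y : X) :
    α * dist (x n) (T (x n)) ≤ dist (x n) y ∨
      α * dist (x (n + 1)) (T (x (n + 1))) ≤ dist (x (n + 1)) y := by
  by_contra h
  push_neg at h
  obtain ⟨h1, h2⟩ := h
  rw [← hx n] at h1
  rw [← hx (n+1)] at h2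
  obtain ⟨hα0, hα2⟩ := hα
  have key : dist (x n) (x (n+1)) ≤ dist (x n) y + dist (x (n+1)) y :=
    dist_triangle_right _ _ _
  have h2' : dist (x (n+1)) y < α * dist (x n) (x (n+1)) :=
    lt_of_lt_of_le h2 (by nlinarith)
  nlinarith [dist_nonneg (x := x n) (y := x (n+1))]
end

section
/- Let (X,d) be a complete metric space, T : X → X, α ∈ (0, 1/2], ψ an altering distance function, and φ : [0,∞)^k → [0,∞) with φ(0,...,0) = 0, upper semicontinuity along convergent sequences (lim sup φ(t^{(n)}) ≤ φ(t) when t^{(n)} → t), and φ(t_1,...,t_k) < ψ(max_i t_i) whenever (t_1,...,t_k) ≠ (0,...,0). Let g_1,...,g_k : [0,∞)^5 → [0,∞) be continuous, coordinatewise nondecreasing, subhomogeneous functions with g_i(1,1,1,0,2), g_i(1,1,1,1,1), g_i(1,1,1,2,0) ∈ (0,1]. Suppose that α·d(x,Tx) ≤ d(x,y) implies ψ(d(Tx,Ty)) ≤ φ(g_1(M_{xy}),...,g_k(M_{xy})) for all x, y ∈ X, where M_{xy} = (d(x,y), d(y,Ty), d(x,Tx), d(x,Ty), d(y,Tx)).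 Then T has a unique fixed point in X. -/
open Filter

theorem stmt_15 {X : Type*} [MetricSpace X] [CompleteSpace X] [Nonempty X]
    (T : X → X) (α : ℝ) (hα : α ∈ Set.Ioc (0:ℝ) (1/2))
    (ψ : ℝ → ℝ)
    (hψc : ContinuousOn ψ (Set.Ici 0)) (hψm : MonotoneOn ψ (Set.Ici 0))
    (hψnn : ∀ t, 0 ≤ t → 0 ≤ ψ t) (hψ0 : ∀ t, 0 ≤ t → (ψ t = 0 ↔ t = 0))
    (k : ℕ) (hk : 0 < k) (φ : (Fin k → ℝ) → ℝ)
    (hφ0 : φ 0 = 0) (hφnn : ∀ s : Fin k → ℝ, 0 ≤ φ s)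
    (hφusc : ∀ (t : ℕ → Fin k → ℝ) (l : Fin k → ℝ),
      (∀ i, Tendsto (fun n => t n i) atTop (nhds (l i))) →
      Filter.limsup (fun n => φ (t n)) atTop ≤ φ l)
    (hφlt : ∀ s : Fin k → ℝ, (∀ i, 0 ≤ s i) → s ≠ 0 →
      φ s < ψ (Finset.univ.sup' ⟨⟨0, hk⟩, Finset.mem_univ _⟩ s))
    (g : Fin k → ℝ → ℝ → ℝ → ℝ → ℝ → ℝ)
    (hg_cont : ∀ i, Continuous
      (fun p : ℝ × ℝ × ℝ × ℝ × ℝ => g i p.1 p.2.1 p.2.2.1 p.2.2.2.1 p.2.2.2.2))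
    (hg_mono : ∀ i, ∀ x₁ x₂ x₃ x₄ x₅ y₁ y₂ y₃ y₄ y₅ : ℝ,
      0 ≤ x₁ → 0 ≤ x₂ → 0 ≤ x₃ → 0 ≤ x₄ → 0 ≤ x₅ →
      x₁ ≤ y₁ → x₂ ≤ y₂ → x₃ ≤ y₃ → x₄ ≤ y₄ → x₅ ≤ y₅ →
      g i x₁ x₂ x₃ x₄ x₅ ≤ g i y₁ y₂ y₃ y₄ y₅)
    (hg_subhom : ∀ i, ∀ a x₁ x₂ x₃ x₄ x₅ : ℝ, 0 ≤ a →
      0 ≤ x₁ → 0 ≤ x₂ → 0 ≤ x₃ → 0 ≤ x₄ → 0 ≤ x₅ →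
      g i (a * x₁) (a * x₂) (a * x₃) (a * x₄) (a * x₅) ≤ a * g i x₁ x₂ x₃ x₄ x₅)
    (hg1 : ∀ i, g i 1 1 1 0 2 ∈ Set.Ioc (0:ℝ) 1)
    (hg2 : ∀ i, g i 1 1 1 1 1 ∈ Set.Ioc (0:ℝ) 1)
    (hg3 : ∀ i, g i 1 1 1 2 0 ∈ Set.Ioc (0:ℝ) 1)
    (hT : ∀ x y : X, α * dist x (T x) ≤ dist x y →
      ψ (dist (T x) (T y)) ≤
        φ (fun i => g i (dist x y) (dist y (T y)) (dist x (T x))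
            (dist x (T y)) (dist y (T x)))) :
    ∃! a : X, T a = a := by
  classical
  obtain ⟨hα0, hα2⟩ := hα
  -- basic facts about g
  have hg0 : ∀ i, g i 0 0 0 0 0 = 0 := by
    intro i
    have hub : g i 0 0 0 0 0 ≤ 0 := by
      have h := hg_subhom i 0 1 1 1 1 1 le_rfl zero_le_one zero_le_one zero_le_one
        zero_le_one zero_le_one
      simpa using h
    have hcont : Continuous (fun a : ℝ => g i a a a a a) := by
      exact (hg_cont i).comp (continuous_id.prodMk (continuous_id.prodMk (continuous_id.prodMk (continuous_id.prodMk continuous_id))))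
    have hlb : 0 ≤ g i 0 0 0 0 0 := by
      have h1 : Tendsto (fun a : ℝ => g i a a a a a) (nhdsWithin 0 (Set.Ioi 0))
          (nhds (g i 0 0 0 0 0)) := (hcont.tendsto 0).mono_left nhdsWithin_le_nhds
      have h2 : Tendsto (fun a : ℝ => a * g i 1 1 1 1 1) (nhdsWithin 0 (Set.Ioi 0))
          (nhds 0) := by
        have hc : Continuous (fun a : ℝ => a * g i 1 1 1 1 1) :=
          continuous_id.mul continuous_const
        have := (hc.tendsto 0).mono_left (nhdsWithin_le_nhds (s := Set.Ioi (0:ℝ)))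
        simpa using this
      refine le_of_tendsto_of_tendsto h2 h1 ?_
      filter_upwards [self_mem_nhdsWithin] with a (ha : a ∈ Set.Ioi (0:ℝ))
      have hapos : 0 < a := ha
      have h := hg_subhom i a⁻¹ a a a a a (by positivity) hapos.le hapos.le hapos.le
        hapos.le hapos.le
      rw [inv_mul_cancel₀ hapos.ne'] at h
      calc a * g i 1 1 1 1 1 ≤ a * (a⁻¹ * g i a a a a a) := by
            exact mul_le_mul_of_nonneg_left h hapos.le
        _ = g i a a a a a := by field_simp
    linarith
  have hgnn : ∀ i (x₁ x₂ x₃ x₄ x₅ : ℝ), 0 ≤ x₁ → 0 ≤ x₂ → 0 ≤ x₃ → 0 ≤ x₄ → 0 ≤ x₅ →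
      0 ≤ g i x₁ x₂ x₃ x₄ x₅ := by
    intro i x₁ x₂ x₃ x₄ x₅ h1 h2 h3 h4 h5
    have := hg_mono i 0 0 0 0 0 x₁ x₂ x₃ x₄ x₅ le_rfl le_rfl le_rfl le_rfl le_rfl h1 h2 h3 h4 h5
    rw [hg0 i] at this; exact this
  have hbd1 : ∀ i (c : ℝ), 0 ≤ c → g i c c c c c ≤ c := by
    intro i c hc
    have h := hg_subhom i c 1 1 1 1 1 hc zero_le_one zero_le_one zero_le_one zero_le_one zero_le_one
    have h2 := (hg2 i).2
    calc g i c c c c c = g i (c*1) (c*1) (c*1) (c*1) (c*1) := by norm_num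
      _ ≤ c * g i 1 1 1 1 1 := h
      _ ≤ c * 1 := mul_le_mul_of_nonneg_left h2 hc
      _ = c := mul_one c
  have hbd2 : ∀ i (c : ℝ), 0 ≤ c → g i c c c (2*c) 0 ≤ c := by
    intro i c hc
    have h := hg_subhom i c 1 1 1 2 0 hc zero_le_one zero_le_one zero_le_one (by norm_num) le_rfl
    have h2 := (hg3 i).2
    calc g i c c c (2*c) 0 = g i (c*1) (c*1) (c*1) (c*2) (c*0) := by ring_nf
      _ ≤ c * g i 1 1 1 2 0 := h
      _ ≤ c * 1 := mul_le_mul_of_nonneg_left h2 hc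
      _ = c := mul_one c
  -- key lemma A : forcing zero
  have keyA : ∀ (b : ℝ) (s : Fin k → ℝ), 0 ≤ b → (∀ i, 0 ≤ s i) → (∀ i, s i ≤ b) →
      ψ b ≤ φ s → b = 0 := by
    intro b s hb hs1 hs2 hle
    rcases eq_or_ne s 0 with h0 | h0
    · rw [h0, hφ0] at hle
      exact (hψ0 b hb).mp (le_antisymm hle (hψnn b hb))
    · exfalso
      have hlt := hφlt s hs1 h0
      have hM0 : (0:ℝ) ≤ Finset.univ.sup' ⟨⟨0, hk⟩, Finset.mem_univ _⟩ s :=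
        le_trans (hs1 ⟨0, hk⟩) (Finset.le_sup' s (Finset.mem_univ _))
      have hMb : Finset.univ.sup' ⟨⟨0, hk⟩, Finset.mem_univ _⟩ s ≤ b :=
        Finset.sup'_le _ _ fun i _ => hs2 i
      have := hψm (Set.mem_Ici.mpr hM0) (Set.mem_Ici.mpr hb) hMb
      linarith
  -- key lemma B : upper bound on φ
  have keyB : ∀ (s : Fin k → ℝ) (B : ℝ), 0 ≤ B → (∀ i, 0 ≤ s i) → (∀ i, s i ≤ B) →
      φ s ≤ ψ B := by
    intro s B hB hs1 hs2
    rcases eq_or_ne s 0 with h0 | h0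
    · rw [h0, hφ0]; exact hψnn B hB
    · have hlt := hφlt s hs1 h0
      have hM0 : (0:ℝ) ≤ Finset.univ.sup' ⟨⟨0, hk⟩, Finset.mem_univ _⟩ s :=
        le_trans (hs1 ⟨0, hk⟩) (Finset.le_sup' s (Finset.mem_univ _))
      have hMb : Finset.univ.sup' ⟨⟨0, hk⟩, Finset.mem_univ _⟩ s ≤ B :=
        Finset.sup'_le _ _ fun i _ => hs2 i
      have := hψm (Set.mem_Ici.mpr hM0) (Set.mem_Ici.mpr hB) hMb
      linarith
  -- key limit lemma
  have keyLIM : ∀ (b p1 p2 p3 p4 p5 : ℕ → ℝ) (L q1 q2 q3 q4 q5 : ℝ),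
      (∀ n, 0 ≤ b n) → (∀ n, 0 ≤ p1 n) → (∀ n, 0 ≤ p2 n) → (∀ n, 0 ≤ p3 n) →
      (∀ n, 0 ≤ p4 n) → (∀ n, 0 ≤ p5 n) →
      Tendsto b atTop (nhds L) → Tendsto p1 atTop (nhds q1) → Tendsto p2 atTop (nhds q2) →
      Tendsto p3 atTop (nhds q3) → Tendsto p4 atTop (nhds q4) → Tendsto p5 atTop (nhds q5) →
      (∀ᶠ n in atTop, ψ (b n) ≤ φ (fun i => g i (p1 n) (p2 n) (p3 n) (p4 n) (p5 n))) →
      ψ L ≤ φ (fun i => g i q1 q2 q3 q4 q5) := by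
    intro b p1 p2 p3 p4 p5 L q1 q2 q3 q4 q5 hb hp1 hp2 hp3 hp4 hp5 htb ht1 ht2 ht3 ht4 ht5 hev
    have hL : 0 ≤ L := le_of_tendsto_of_tendsto' tendsto_const_nhds htb hb
    have hq1 : 0 ≤ q1 := le_of_tendsto_of_tendsto' tendsto_const_nhds ht1 hp1
    have hq2 : 0 ≤ q2 := le_of_tendsto_of_tendsto' tendsto_const_nhds ht2 hp2
    have hq3 : 0 ≤ q3 := le_of_tendsto_of_tendsto' tendsto_const_nhds ht3 hp3
    have hq4 : 0 ≤ q4 := le_of_tendsto_of_tendsto' tendsto_const_nhds ht4 hp4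
    have hq5 : 0 ≤ q5 := le_of_tendsto_of_tendsto' tendsto_const_nhds ht5 hp5
    set t : ℕ → Fin k → ℝ := fun n i => g i (p1 n) (p2 n) (p3 n) (p4 n) (p5 n) with htdef
    have htend : ∀ i, Tendsto (fun n => t n i) atTop
        (nhds (g i q1 q2 q3 q4 q5)) := by
      intro i
      have h5 : Tendsto (fun n => ((p1 n, p2 n, p3 n, p4 n, p5 n) : ℝ×ℝ×ℝ×ℝ×ℝ)) atTop
          (nhds (q1, q2, q3, q4, q5)) :=
        ht1.prodMk_nhds (ht2.prodMk_nhds (ht3.prodMk_nhds (ht4.prodMk_nhds ht5)))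
      exact ((hg_cont i).tendsto _).comp h5
    set B : ℝ := q1 + q2 + q3 + q4 + q5 + 1 with hBdef
    have hB0 : 0 ≤ B := by positivity
    have hbound : ∀ᶠ n in atTop, φ (t n) ≤ ψ B := by
      have e1 := ht1.eventually_lt_const (show q1 < q1 + 1 by linarith)
      have e2 := ht2.eventually_lt_const (show q2 < q2 + 1 by linarith)
      have e3 := ht3.eventually_lt_const (show q3 < q3 + 1 by linarith)
      have e4 := ht4.eventually_lt_const (show q4 < q4 + 1 by linarith)
      have e5 := ht5.eventually_lt_const (show q5 < q5 + 1 by linarith)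
      filter_upwards [e1, e2, e3, e4, e5] with n h1 h2 h3 h4 h5
      refine keyB _ B hB0 (fun i => hgnn i _ _ _ _ _ (hp1 n) (hp2 n) (hp3 n) (hp4 n) (hp5 n))
        (fun i => ?_)
      calc t n i ≤ g i B B B B B := by
            refine hg_mono i _ _ _ _ _ _ _ _ _ _ (hp1 n) (hp2 n) (hp3 n) (hp4 n) (hp5 n)
              (by linarith) (by linarith) (by linarith) (by linarith) (by linarith)
        _ ≤ B := hbd1 i B hB0
    have hψb : Tendsto (fun n => ψ (b n)) atTop (nhds (ψ L)) := by
      have h1 : Tendsto b atTop (nhdsWithin L (Set.Ici 0)) :=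
        tendsto_nhdsWithin_of_tendsto_nhds_of_eventually_within _ htb
          (Eventually.of_forall hb)
      exact ((hψc L hL).tendsto).comp h1
    have heq : limsup (fun n => ψ (b n)) atTop = ψ L := hψb.limsup_eq
    have hle1 : limsup (fun n => ψ (b n)) atTop ≤ limsup (fun n => φ (t n)) atTop :=
      limsup_le_limsup hev hψb.isCoboundedUnder_le (isBoundedUnder_of_eventually_le hbound)
    have hle2 := hφusc t _ htend
    rw [heq] at hle1
    exact le_trans hle1 hle2
  -- the Picard sequence
  obtain ⟨x₀⟩ := (inferInstance : Nonempty X)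
  set xx : ℕ → X := fun n => T^[n] x₀ with hxxdef
  have hx : ∀ n, xx (n+1) = T (xx n) := fun n => Function.iterate_succ_apply' T n x₀
  set d : ℕ → ℝ := fun n => dist (xx n) (xx (n+1)) with hddef
  have hdnn : ∀ n, 0 ≤ d n := fun n => dist_nonneg
  have hstep : ∀ n, ψ (d (n+1)) ≤
      φ (fun i => g i (d n) (d (n+1)) (d n) (dist (xx n) (xx (n+2))) 0) := by
    intro n
    have hcond : α * dist (xx n) (T (xx n)) ≤ dist (xx n) (xx (n+1)) := by
      rw [← hx n]
      nlinarith [dist_nonneg (x := xx n) (y := xx (n+1))]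
    have h := hT (xx n) (xx (n+1)) hcond
    rw [← hx n, ← hx (n+1)] at h
    simpa [dist_self] using h
  have hmono : ∀ n, d (n+1) ≤ d n := by
    intro n
    by_contra hlt
    push_neg at hlt
    have he : dist (xx n) (xx (n+2)) ≤ d n + d (n+1) := dist_triangle _ (xx (n+1)) _
    have hz := keyA (d (n+1)) (fun i => g i (d n) (d (n+1)) (d n) (dist (xx n) (xx (n+2))) 0)
      (hdnn _)
      (fun i => hgnn i _ _ _ _ _ (hdnn n) (hdnn _) (hdnn n) dist_nonneg le_rfl)
      (fun i => by
        calc g i (d n) (d (n+1)) (d n) (dist (xx n) (xx (n+2))) 0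
            ≤ g i (d (n+1)) (d (n+1)) (d (n+1)) (2 * d (n+1)) 0 :=
              hg_mono i _ _ _ _ _ _ _ _ _ _ (hdnn n) (hdnn _) (hdnn n) dist_nonneg le_rfl
                hlt.le le_rfl hlt.le (by linarith) le_rfl
          _ ≤ d (n+1) := hbd2 i _ (hdnn _))
      (hstep n)
    have := hdnn n
    linarith
  have hanti : Antitone d := antitone_nat_of_succ_le hmono
  have hdbdd : BddBelow (Set.range d) := ⟨0, fun y ⟨n, hn⟩ => hn ▸ hdnn n⟩
  have hdr : Tendsto d atTop (nhds (⨅ n, d n)) := tendsto_atTop_ciInf hanti hdbdd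
  set r : ℝ := ⨅ n, d n with hrdef
  have hrnn : 0 ≤ r := le_ciInf fun n => hdnn n
  -- r = 0
  have hr0 : r = 0 := by
    have hebd : ∀ n, dist (xx n) (xx (n+2)) ∈ Set.Icc (0:ℝ) (2 * d 0) := by
      intro n
      refine ⟨dist_nonneg, ?_⟩
      have h1 : dist (xx n) (xx (n+2)) ≤ d n + d (n+1) := dist_triangle _ (xx (n+1)) _
      have h2 : d n ≤ d 0 := hanti (Nat.zero_le n)
      have h3 : d (n+1) ≤ d 0 := hanti (Nat.zero_le _)
      linarith
    obtain ⟨u, hu, σ, hσ, hσt⟩ :=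
      tendsto_subseq_of_bounded (Metric.isBounded_Icc (0:ℝ) (2 * d 0)) hebd
    rw [IsClosed.closure_eq isClosed_Icc] at hu
    have hdσ : Tendsto (fun j => d (σ j)) atTop (nhds r) := hdr.comp hσ.tendsto_atTop
    have hdσ1 : Tendsto (fun j => d (σ j + 1)) atTop (nhds r) :=
      (hdr.comp (tendsto_add_atTop_nat 1)).comp hσ.tendsto_atTop
    have hu2r : u ≤ 2 * r := by
      refine le_of_tendsto_of_tendsto' hσt (by simpa [two_mul] using hdσ.add hdσ1) ?_
      intro j
      exact dist_triangle _ (xx (σ j + 1)) _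
    have hψr : ψ r ≤ φ (fun i => g i r r r u 0) := by
      refine keyLIM (fun j => d (σ j + 1)) (fun j => d (σ j)) (fun j => d (σ j + 1))
        (fun j => d (σ j)) (fun j => dist (xx (σ j)) (xx (σ j + 2))) (fun _ => 0)
        r r r r u 0 (fun j => hdnn _) (fun j => hdnn _) (fun j => hdnn _) (fun j => hdnn _)
        (fun j => dist_nonneg) (fun j => le_rfl) hdσ1 hdσ hdσ1 hdσ hσt tendsto_const_nhds ?_
      exact Eventually.of_forall fun j => hstep (σ j)
    have := keyA r (fun i => g i r r r u 0) hrnn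
      (fun i => hgnn i _ _ _ _ _ hrnn hrnn hrnn hu.1 le_rfl)
      (fun i => by
        calc g i r r r u 0 ≤ g i r r r (2*r) 0 :=
              hg_mono i _ _ _ _ _ _ _ _ _ _ hrnn hrnn hrnn hu.1 le_rfl
                le_rfl le_rfl le_rfl hu2r le_rfl
          _ ≤ r := hbd2 i r hrnn)
      hψr
    exact this
  have hd0 : Tendsto d atTop (nhds 0) := hr0 ▸ hdr
  -- Cauchy
  have hcauchy : CauchySeq xx := by
    rw [Metric.cauchySeq_iff]
    by_contra hc
    push_neg at hc
    obtain ⟨ε, hε, hC⟩ := hc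
    have hsel : ∀ j : ℕ, ∃ nj mj : ℕ, j ≤ nj ∧ nj < mj ∧ ε ≤ dist (xx mj) (xx nj) ∧
        dist (xx (mj - 1)) (xx nj) < ε := by
      intro j
      obtain ⟨m, hm, n, hn, hdist⟩ := hC j
      have H : ∀ a b : ℕ, j ≤ b → b < a → ε ≤ dist (xx a) (xx b) →
          ∃ nj mj : ℕ, j ≤ nj ∧ nj < mj ∧ ε ≤ dist (xx mj) (xx nj) ∧
            dist (xx (mj - 1)) (xx nj) < ε := by
        intro a b hjb hba hdab
        have hex : ∃ m', b < m' ∧ ε ≤ dist (xx m') (xx b) := ⟨a, hba, hdab⟩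
        obtain ⟨hm1, hm2⟩ := Nat.find_spec hex
        refine ⟨b, Nat.find hex, hjb, hm1, hm2, ?_⟩
        rcases Nat.lt_or_ge b (Nat.find hex - 1) with h | h
        · have hmin := Nat.find_min hex (m := Nat.find hex - 1) (by omega)
          push_neg at hmin
          exact hmin h
        · have hb1 : Nat.find hex - 1 = b := by omega
          rw [hb1, dist_self]
          linarith
      have hne : m ≠ n := by
        intro h; rw [h, dist_self] at hdist; linarith
      rcases lt_or_gt_of_ne hne with h | h
      · exact H n m hm h (by rwa [dist_comm])
      · exact H m n hn h hdist
    choose nf mf hjn hnm hdmn hdm1 using hsel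
    have hmf1 : ∀ j, mf j - 1 + 1 = mf j := fun j => by have := hnm j; omega
    have hdj : ∀ j, dist (xx (mf j)) (xx (mf j - 1)) = d (mf j - 1) := by
      intro j
      rw [dist_comm]
      show dist (xx (mf j - 1)) (xx (mf j)) = dist (xx (mf j - 1)) (xx (mf j - 1 + 1))
      rw [hmf1 j]
    have hdle : ∀ j, d (mf j - 1) ≤ d j := fun j => hanti (by have h1 := hjn j; have h2 := hnm j; omega)
    have hdmfj : ∀ j, d (mf j) ≤ d j := fun j => hanti (le_trans (hjn j) (hnm j).le)
    have hdnfj : ∀ j, d (nf j) ≤ d j := fun j => hanti (hjn j)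
    have htdmf : Tendsto (fun j => d (mf j)) atTop (nhds 0) :=
      tendsto_of_tendsto_of_tendsto_of_le_of_le tendsto_const_nhds hd0
        (fun j => hdnn _) (fun j => hdmfj j)
    have htdnf : Tendsto (fun j => d (nf j)) atTop (nhds 0) :=
      tendsto_of_tendsto_of_tendsto_of_le_of_le tendsto_const_nhds hd0
        (fun j => hdnn _) (fun j => hdnfj j)
    have hA : Tendsto (fun j => dist (xx (mf j)) (xx (nf j))) atTop (nhds ε) := by
      refine tendsto_of_tendsto_of_tendsto_of_le_of_le tendsto_const_nhds
        (by simpa using (hd0.add (tendsto_const_nhds (x := ε)))) (fun j => hdmn j) (fun j => ?_)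
      calc dist (xx (mf j)) (xx (nf j))
          ≤ dist (xx (mf j)) (xx (mf j - 1)) + dist (xx (mf j - 1)) (xx (nf j)) :=
            dist_triangle _ _ _
        _ ≤ d j + ε := by
            rw [hdj j]
            have := hdm1 j
            have := hdle j
            linarith
    have hB : Tendsto (fun j => dist (xx (mf j + 1)) (xx (nf j + 1))) atTop (nhds ε) := by
      refine tendsto_of_tendsto_of_tendsto_of_le_of_le
        (f := fun j => dist (xx (mf j + 1)) (xx (nf j + 1)))
        (g := fun j => dist (xx (mf j)) (xx (nf j)) - d (mf j) - d (nf j))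
        (h := fun j => dist (xx (mf j)) (xx (nf j)) + d (mf j) + d (nf j))
        (by simpa using (hA.sub htdmf).sub htdnf)
        (by simpa using (hA.add htdmf).add htdnf) (fun j => ?_) (fun j => ?_)
      · have h1 : dist (xx (mf j)) (xx (nf j)) ≤
            dist (xx (mf j)) (xx (mf j + 1)) + dist (xx (mf j + 1)) (xx (nf j + 1)) +
              dist (xx (nf j + 1)) (xx (nf j)) := dist_triangle4 _ _ _ _
        rw [dist_comm (xx (nf j + 1))] at h1
        show dist (xx (mf j)) (xx (nf j)) - d (mf j) - d (nf j) ≤ _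
        rw [hddef]
        dsimp only
        linarith
      · have h1 : dist (xx (mf j + 1)) (xx (nf j + 1)) ≤
            dist (xx (mf j + 1)) (xx (mf j)) + dist (xx (mf j)) (xx (nf j)) +
              dist (xx (nf j)) (xx (nf j + 1)) := dist_triangle4 _ _ _ _
        rw [dist_comm (xx (mf j + 1)) (xx (mf j))] at h1
        show _ ≤ dist (xx (mf j)) (xx (nf j)) + d (mf j) + d (nf j)
        rw [hddef]
        dsimp only
        linarith
    have hC4 : Tendsto (fun j => dist (xx (mf j)) (xx (nf j + 1))) atTop (nhds ε) := by
      refine tendsto_of_tendsto_of_tendsto_of_le_of_le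
        (f := fun j => dist (xx (mf j)) (xx (nf j + 1)))
        (g := fun j => dist (xx (mf j)) (xx (nf j)) - d (nf j))
        (h := fun j => dist (xx (mf j)) (xx (nf j)) + d (nf j))
        (by simpa using hA.sub htdnf) (by simpa using hA.add htdnf) (fun j => ?_) (fun j => ?_)
      · have h1 : dist (xx (mf j)) (xx (nf j)) ≤
            dist (xx (mf j)) (xx (nf j + 1)) + dist (xx (nf j + 1)) (xx (nf j)) :=
          dist_triangle _ _ _
        rw [dist_comm (xx (nf j + 1))] at h1
        show dist (xx (mf j)) (xx (nf j)) - d (nf j) ≤ _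
        rw [hddef]; dsimp only; linarith
      · have h1 : dist (xx (mf j)) (xx (nf j + 1)) ≤
            dist (xx (mf j)) (xx (nf j)) + dist (xx (nf j)) (xx (nf j + 1)) :=
          dist_triangle _ _ _
        show _ ≤ dist (xx (mf j)) (xx (nf j)) + d (nf j)
        rw [hddef]; dsimp only; linarith
    have hD : Tendsto (fun j => dist (xx (nf j)) (xx (mf j + 1))) atTop (nhds ε) := by
      refine tendsto_of_tendsto_of_tendsto_of_le_of_le
        (f := fun j => dist (xx (nf j)) (xx (mf j + 1)))
        (g := fun j => dist (xx (mf j)) (xx (nf j)) - d (mf j))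
        (h := fun j => dist (xx (mf j)) (xx (nf j)) + d (mf j))
        (by simpa using hA.sub htdmf) (by simpa using hA.add htdmf) (fun j => ?_) (fun j => ?_)
      · have h1 : dist (xx (mf j)) (xx (nf j)) ≤
            dist (xx (mf j)) (xx (mf j + 1)) + dist (xx (mf j + 1)) (xx (nf j)) :=
          dist_triangle _ _ _
        rw [dist_comm (xx (mf j + 1))] at h1
        show dist (xx (mf j)) (xx (nf j)) - d (mf j) ≤ _
        rw [hddef]; dsimp only; linarith
      · have h1 : dist (xx (nf j)) (xx (mf j + 1)) ≤
            dist (xx (nf j)) (xx (mf j)) + dist (xx (mf j)) (xx (mf j + 1)) :=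
          dist_triangle _ _ _
        rw [dist_comm (xx (nf j)) (xx (mf j))] at h1
        show _ ≤ dist (xx (mf j)) (xx (nf j)) + d (mf j)
        rw [hddef]; dsimp only; linarith
    have hev : ∀ᶠ j in atTop, ψ (dist (xx (mf j + 1)) (xx (nf j + 1))) ≤
        φ (fun i => g i (dist (xx (mf j)) (xx (nf j))) (d (nf j)) (d (mf j))
            (dist (xx (mf j)) (xx (nf j + 1))) (dist (xx (nf j)) (xx (mf j + 1)))) := by
      have hevd : ∀ᶠ j in atTop, d j < ε := hd0.eventually_lt_const hε
      filter_upwards [hevd] with j hj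
      have hcond : α * dist (xx (mf j)) (T (xx (mf j))) ≤ dist (xx (mf j)) (xx (nf j)) := by
        rw [← hx (mf j)]
        have h1 : α * d (mf j) ≤ d (mf j) := by nlinarith [hdnn (mf j)]
        have h2 := hdmfj j
        have h3 := hdmn j
        show α * d (mf j) ≤ _
        linarith
      have h := hT (xx (mf j)) (xx (nf j)) hcond
      rw [← hx (mf j), ← hx (nf j)] at h
      exact h
    have hψε : ψ ε ≤ φ (fun i => g i ε 0 0 ε ε) := by
      refine keyLIM (fun j => dist (xx (mf j + 1)) (xx (nf j + 1)))
        (fun j => dist (xx (mf j)) (xx (nf j))) (fun j => d (nf j)) (fun j => d (mf j))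
        (fun j => dist (xx (mf j)) (xx (nf j + 1))) (fun j => dist (xx (nf j)) (xx (mf j + 1)))
        ε ε 0 0 ε ε (fun j => dist_nonneg) (fun j => dist_nonneg) (fun j => hdnn _)
        (fun j => hdnn _) (fun j => dist_nonneg) (fun j => dist_nonneg)
        hB hA htdnf htdmf hC4 hD hev
    have hε0 := keyA ε (fun i => g i ε 0 0 ε ε) hε.le
      (fun i => hgnn i _ _ _ _ _ hε.le le_rfl le_rfl hε.le hε.le)
      (fun i => by
        calc g i ε 0 0 ε ε ≤ g i ε ε ε ε ε :=
              hg_mono i _ _ _ _ _ _ _ _ _ _ hε.le le_rfl le_rfl hε.le hε.le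
                le_rfl hε.le hε.le le_rfl le_rfl
          _ ≤ ε := hbd1 i ε hε.le)
      hψε
    linarith
  obtain ⟨z, hz⟩ := cauchySeq_tendsto_of_complete hcauchy
  have hdz : Tendsto (fun n => dist (xx n) z) atTop (nhds 0) := by
    simpa using hz.dist (tendsto_const_nhds (x := z))
  -- fixed point
  have hsel2 : ∀ j, ∃ kj, (kj = j ∨ kj = j + 1) ∧ α * d kj ≤ dist (xx kj) z := by
    intro j
    by_contra hcon
    push_neg at hcon
    have h1 := hcon j (Or.inl rfl)
    have h2 := hcon (j+1) (Or.inr rfl)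
    have htri : d j ≤ dist (xx j) z + dist (xx (j+1)) z := by
      have := dist_triangle (xx j) z (xx (j+1))
      rw [dist_comm z (xx (j+1))] at this
      exact this
    have hm := hmono j
    have hd1 := hdnn j
    have hd2 := hdnn (j+1)
    nlinarith [mul_le_mul_of_nonneg_right hα2 (show (0:ℝ) ≤ d j + d (j+1) by linarith)]
  choose kf hkor hkle using hsel2
  have hkj1 : ∀ j, dist (xx (kf j)) z ≤ dist (xx j) z + dist (xx (j+1)) z := by
    intro j
    rcases hkor j with h | h <;> rw [h] <;>
      [exact le_add_of_nonneg_right dist_nonneg; exact le_add_of_nonneg_left dist_nonneg]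
  have hkj2 : ∀ j, dist (xx (kf j + 1)) z ≤ dist (xx (j+1)) z + dist (xx (j+2)) z := by
    intro j
    rcases hkor j with h | h <;> rw [h] <;>
      [exact le_add_of_nonneg_right dist_nonneg; exact le_add_of_nonneg_left dist_nonneg]
  have htz1 : Tendsto (fun j => dist (xx (kf j)) z) atTop (nhds 0) := by
    refine tendsto_of_tendsto_of_tendsto_of_le_of_le tendsto_const_nhds
      (f := fun j => dist (xx (kf j)) z)
      (h := fun j => dist (xx j) z + dist (xx (j+1)) z)
      ?_ (fun j => dist_nonneg) (fun j => hkj1 j)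
    simpa using hdz.add (hdz.comp (tendsto_add_atTop_nat 1))
  have htz2 : Tendsto (fun j => dist (xx (kf j + 1)) z) atTop (nhds 0) := by
    refine tendsto_of_tendsto_of_tendsto_of_le_of_le tendsto_const_nhds
      (f := fun j => dist (xx (kf j + 1)) z)
      (h := fun j => dist (xx (j+1)) z + dist (xx (j+2)) z)
      ?_ (fun j => dist_nonneg) (fun j => hkj2 j)
    simpa using (hdz.comp (tendsto_add_atTop_nat 1)).add (hdz.comp (tendsto_add_atTop_nat 2))
  have htdk : Tendsto (fun j => d (kf j)) atTop (nhds 0) := by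
    refine tendsto_of_tendsto_of_tendsto_of_le_of_le tendsto_const_nhds hd0
      (fun j => hdnn _) (fun j => hanti ?_)
    rcases hkor j with h | h <;> omega
  set D : ℝ := dist z (T z) with hDdef
  have hDnn : 0 ≤ D := dist_nonneg
  have hp4 : Tendsto (fun j => dist (xx (kf j)) (T z)) atTop (nhds D) := by
    refine tendsto_of_tendsto_of_tendsto_of_le_of_le
      (g := fun j => D - dist (xx (kf j)) z) (h := fun j => D + dist (xx (kf j)) z)
      (by simpa using (tendsto_const_nhds (x := D)).sub htz1)
      (by simpa using (tendsto_const_nhds (x := D)).add htz1) (fun j => ?_) (fun j => ?_)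
    · have h1 : D ≤ dist z (xx (kf j)) + dist (xx (kf j)) (T z) := dist_triangle _ _ _
      rw [dist_comm z (xx (kf j))] at h1
      show D - dist (xx (kf j)) z ≤ _
      linarith
    · have h1 : dist (xx (kf j)) (T z) ≤ dist (xx (kf j)) z + D := dist_triangle _ _ _
      show _ ≤ D + dist (xx (kf j)) z
      linarith
  have hb : Tendsto (fun j => dist (xx (kf j + 1)) (T z)) atTop (nhds D) := by
    refine tendsto_of_tendsto_of_tendsto_of_le_of_le
      (g := fun j => D - dist (xx (kf j + 1)) z) (h := fun j => D + dist (xx (kf j + 1)) z)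
      (by simpa using (tendsto_const_nhds (x := D)).sub htz2)
      (by simpa using (tendsto_const_nhds (x := D)).add htz2) (fun j => ?_) (fun j => ?_)
    · have h1 : D ≤ dist z (xx (kf j + 1)) + dist (xx (kf j + 1)) (T z) := dist_triangle _ _ _
      rw [dist_comm z (xx (kf j + 1))] at h1
      show D - dist (xx (kf j + 1)) z ≤ _
      linarith
    · have h1 : dist (xx (kf j + 1)) (T z) ≤ dist (xx (kf j + 1)) z + D := dist_triangle _ _ _
      show _ ≤ D + dist (xx (kf j + 1)) z
      linarith
  have hp5 : Tendsto (fun j => dist z (xx (kf j + 1))) atTop (nhds 0) := by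
    have : (fun j => dist z (xx (kf j + 1))) = fun j => dist (xx (kf j + 1)) z :=
      funext fun j => dist_comm _ _
    rw [this]; exact htz2
  have hev2 : ∀ᶠ j in atTop, ψ (dist (xx (kf j + 1)) (T z)) ≤
      φ (fun i => g i (dist (xx (kf j)) z) D (d (kf j))
          (dist (xx (kf j)) (T z)) (dist z (xx (kf j + 1)))) := by
    refine Eventually.of_forall fun j => ?_
    have hcond : α * dist (xx (kf j)) (T (xx (kf j))) ≤ dist (xx (kf j)) z := by
      rw [← hx (kf j)]
      exact hkle j
    have h := hT (xx (kf j)) z hcond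
    rw [← hx (kf j)] at h
    exact h
  have hψD : ψ D ≤ φ (fun i => g i 0 D 0 D 0) :=
    keyLIM (fun j => dist (xx (kf j + 1)) (T z)) (fun j => dist (xx (kf j)) z)
      (fun _ => D) (fun j => d (kf j)) (fun j => dist (xx (kf j)) (T z))
      (fun j => dist z (xx (kf j + 1))) D 0 D 0 D 0
      (fun j => dist_nonneg) (fun j => dist_nonneg) (fun _ => hDnn) (fun j => hdnn _)
      (fun j => dist_nonneg) (fun j => dist_nonneg)
      hb htz1 tendsto_const_nhds htdk hp4 hp5 hev2
  have hD0 : D = 0 := keyA D (fun i => g i 0 D 0 D 0) hDnn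
    (fun i => hgnn i _ _ _ _ _ le_rfl hDnn le_rfl hDnn le_rfl)
    (fun i => by
      calc g i 0 D 0 D 0 ≤ g i D D D D D :=
            hg_mono i _ _ _ _ _ _ _ _ _ _ le_rfl hDnn le_rfl hDnn le_rfl
              hDnn le_rfl hDnn le_rfl hDnn
        _ ≤ D := hbd1 i D hDnn)
    hψD
  have hfix : T z = z := (dist_eq_zero.mp hD0).symm
  refine ⟨z, hfix, ?_⟩
  intro w hw
  have hcond : α * dist z (T z) ≤ dist z w := by
    rw [hfix, dist_self, mul_zero]
    exact dist_nonneg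
  have h := hT z w hcond
  simp only [hfix, hw, dist_self, dist_comm w z] at h
  have hzw : dist z w = 0 := keyA (dist z w) (fun i => g i (dist z w) 0 0 (dist z w) (dist z w))
    dist_nonneg
    (fun i => hgnn i _ _ _ _ _ dist_nonneg le_rfl le_rfl dist_nonneg dist_nonneg)
    (fun i => by
      calc g i (dist z w) 0 0 (dist z w) (dist z w)
          ≤ g i (dist z w) (dist z w) (dist z w) (dist z w) (dist z w) :=
            hg_mono i _ _ _ _ _ _ _ _ _ _ dist_nonneg le_rfl le_rfl dist_nonneg dist_nonneg
              le_rfl dist_nonneg dist_nonneg le_rfl le_rfl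
        _ ≤ dist z w := hbd1 i _ dist_nonneg)
    h
  exact (dist_eq_zero.mp (by rwa [dist_comm] at hzw))
end

section
/- Under the hypotheses of the main theorem (complete metric space (X,d), α ∈ (0,1/2], ψ an altering distance, φ and g_1,...,g_k as above, and α·d(x,Tx) ≤ d(x,y) implies ψ(d(Tx,Ty)) ≤ φ(g_1(M_{xy}),...,g_k(M_{xy}))), the Picard orbit x_{n+1} = T x_n from any x_0 satisfies: d(x_{n+1}, x_{n+2}) < d(x_n, x_{n+1}) whenever d(x_n, x_{n+1}) > 0, and lim_{n→∞} d(x_n, x_{n+1}) = 0. -/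
open Filter

set_option maxHeartbeats 1000000 in
theorem stmt_16 {X : Type*} [MetricSpace X] [CompleteSpace X] [Nonempty X]
    (T : X → X) (α : ℝ) (hα : α ∈ Set.Ioc (0:ℝ) (1/2))
    (ψ : ℝ → ℝ)
    (hψc : ContinuousOn ψ (Set.Ici 0)) (hψm : MonotoneOn ψ (Set.Ici 0))
    (hψnn : ∀ t, 0 ≤ t → 0 ≤ ψ t) (hψ0 : ∀ t, 0 ≤ t → (ψ t = 0 ↔ t = 0))
    (k : ℕ) (hk : 0 < k) (φ : (Fin k → ℝ) → ℝ)
    (hφ0 : φ 0 = 0) (hφnn : ∀ s : Fin k → ℝ, 0 ≤ φ s)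
    (hφusc : ∀ (t : ℕ → Fin k → ℝ) (l : Fin k → ℝ),
      (∀ i, Tendsto (fun n => t n i) atTop (nhds (l i))) →
      Filter.limsup (fun n => φ (t n)) atTop ≤ φ l)
    (hφlt : ∀ s : Fin k → ℝ, (∀ i, 0 ≤ s i) → s ≠ 0 →
      φ s < ψ (Finset.univ.sup' ⟨⟨0, hk⟩, Finset.mem_univ _⟩ s))
    (g : Fin k → ℝ → ℝ → ℝ → ℝ → ℝ → ℝ)
    (hg_cont : ∀ i, Continuous
      (fun p : ℝ × ℝ × ℝ × ℝ × ℝ => g i p.1 p.2.1 p.2.2.1 p.2.2.2.1 p.2.2.2.2))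
    (hg_mono : ∀ i, ∀ x₁ x₂ x₃ x₄ x₅ y₁ y₂ y₃ y₄ y₅ : ℝ,
      0 ≤ x₁ → 0 ≤ x₂ → 0 ≤ x₃ → 0 ≤ x₄ → 0 ≤ x₅ →
      x₁ ≤ y₁ → x₂ ≤ y₂ → x₃ ≤ y₃ → x₄ ≤ y₄ → x₅ ≤ y₅ →
      g i x₁ x₂ x₃ x₄ x₅ ≤ g i y₁ y₂ y₃ y₄ y₅)
    (hg_subhom : ∀ i, ∀ a x₁ x₂ x₃ x₄ x₅ : ℝ, 0 ≤ a →
      0 ≤ x₁ → 0 ≤ x₂ → 0 ≤ x₃ → 0 ≤ x₄ → 0 ≤ x₅ →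
      g i (a * x₁) (a * x₂) (a * x₃) (a * x₄) (a * x₅) ≤ a * g i x₁ x₂ x₃ x₄ x₅)
    (hg1 : ∀ i, g i 1 1 1 0 2 ∈ Set.Ioc (0:ℝ) 1)
    (hg2 : ∀ i, g i 1 1 1 1 1 ∈ Set.Ioc (0:ℝ) 1)
    (hg3 : ∀ i, g i 1 1 1 2 0 ∈ Set.Ioc (0:ℝ) 1)
    (hT : ∀ x y : X, α * dist x (T x) ≤ dist x y →
      ψ (dist (T x) (T y)) ≤
        φ (fun i => g i (dist x y) (dist y (T y)) (dist x (T x))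
            (dist x (T y)) (dist y (T x))))
    (x : ℕ → X) (hx : ∀ n, x (n + 1) = T (x n)) :
    (∀ n, 0 < dist (x n) (x (n + 1)) →
      dist (x (n + 1)) (x (n + 2)) < dist (x n) (x (n + 1))) ∧
    Tendsto (fun n => dist (x n) (x (n + 1))) atTop (nhds 0) := by
  set d : ℕ → ℝ := fun n => dist (x n) (x (n + 1)) with hd
  have hdnn : ∀ n, 0 ≤ d n := fun n => dist_nonneg
  -- g is nonnegative on the nonnegative orthant
  have gnn : ∀ i (v1 v2 v3 v4 v5 : ℝ), 0 ≤ v1 → 0 ≤ v2 → 0 ≤ v3 → 0 ≤ v4 → 0 ≤ v5 →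
      0 ≤ g i v1 v2 v3 v4 v5 := by
    intro i v1 v2 v3 v4 v5 h1 h2 h3 h4 h5
    have hm := hg_mono i v1 v2 v3 v4 v5 (2*v1) (2*v2) (2*v3) (2*v4) (2*v5) h1 h2 h3 h4 h5
      (by linarith) (by linarith) (by linarith) (by linarith) (by linarith)
    have hs := hg_subhom i 2 v1 v2 v3 v4 v5 (by norm_num) h1 h2 h3 h4 h5
    linarith
  -- key inequality from hT
  have key : ∀ n, ψ (d (n+1)) ≤ φ (fun i => g i (d n) (d (n+1)) (d n)
      (dist (x n) (x (n+2))) 0) := by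
    intro n
    have hcond : α * dist (x n) (T (x n)) ≤ dist (x n) (x (n+1)) := by
      rw [← hx n]
      nlinarith [hdnn n, hα.1, hα.2]
    have h := hT (x n) (x (n+1)) hcond
    rw [← hx n, ← hx (n+1)] at h
    simpa [hd, dist_self] using h
  -- coordinatewise bound
  have sle : ∀ n i, g i (d n) (d (n+1)) (d n) (dist (x n) (x (n+2))) 0
      ≤ max (d n) (d (n+1)) := by
    intro n i
    set m := max (d n) (d (n+1)) with hm
    have hm0 : 0 ≤ m := le_trans (hdnn n) (le_max_left _ _)
    have htri : dist (x n) (x (n+2)) ≤ 2 * m := by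
      have := dist_triangle (x n) (x (n+1)) (x (n+2))
      have h1 : d n ≤ m := le_max_left _ _
      have h2 : d (n+1) ≤ m := le_max_right _ _
      simp only [hd] at h1 h2
      linarith
    have h1 : g i (d n) (d (n+1)) (d n) (dist (x n) (x (n+2))) 0
        ≤ g i m m m (2*m) 0 :=
      hg_mono i _ _ _ _ _ _ _ _ _ _ (hdnn n) (hdnn (n+1)) (hdnn n) dist_nonneg le_rfl
        (le_max_left _ _) (le_max_right _ _) (le_max_left _ _) htri le_rfl
    have h2 : g i m m m (2*m) 0 ≤ m * g i 1 1 1 2 0 := by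
      have := hg_subhom i m 1 1 1 2 0 hm0 (by norm_num) (by norm_num) (by norm_num)
        (by norm_num) (by norm_num)
      simpa [mul_comm] using this
    have h3 : m * g i 1 1 1 2 0 ≤ m := by
      nlinarith [(hg3 i).1, (hg3 i).2, hm0]
    linarith
  -- strict decrease
  have step : ∀ n, 0 < d n → d (n+1) < d n := by
    intro n hn
    by_contra hcon
    push_neg at hcon
    have hd1 : 0 < d (n+1) := lt_of_lt_of_le hn hcon
    have hne : ψ (d (n+1)) ≠ 0 := fun h =>
      absurd ((hψ0 _ (hdnn _)).1 h) (ne_of_gt hd1)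
    have hψpos : 0 < ψ (d (n+1)) := lt_of_le_of_ne (hψnn _ (hdnn _)) (Ne.symm hne)
    have hmax : max (d n) (d (n+1)) = d (n+1) := max_eq_right hcon
    have hkey := key n
    by_cases hz : (fun i => g i (d n) (d (n+1)) (d n) (dist (x n) (x (n+2))) 0)
        = (0 : Fin k → ℝ)
    · rw [hz, hφ0] at hkey
      linarith
    · have hlt := hφlt _ (fun i => gnn i _ _ _ _ _ (hdnn n) (hdnn _) (hdnn n)
        dist_nonneg le_rfl) hz
      have hsup_le : Finset.univ.sup' ⟨⟨0, hk⟩, Finset.mem_univ _⟩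
          (fun i => g i (d n) (d (n+1)) (d n) (dist (x n) (x (n+2))) 0) ≤ d (n+1) := by
        apply Finset.sup'_le
        intro i _
        have := sle n i
        rwa [hmax] at this
      have hsup_nn : 0 ≤ Finset.univ.sup' ⟨⟨0, hk⟩, Finset.mem_univ _⟩
          (fun i => g i (d n) (d (n+1)) (d n) (dist (x n) (x (n+2))) 0) :=
        le_trans (gnn ⟨0, hk⟩ _ _ _ _ _ (hdnn n) (hdnn _) (hdnn n) dist_nonneg le_rfl)
          (Finset.le_sup' (fun i => g i (d n) (d (n+1)) (d n) (dist (x n) (x (n+2))) 0)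
            (Finset.mem_univ (⟨0, hk⟩ : Fin k)))
      have hmono := hψm (Set.mem_Ici.2 hsup_nn) (Set.mem_Ici.2 (hdnn (n+1))) hsup_le
      linarith
  -- monotonicity
  have mono : ∀ n, d (n+1) ≤ d n := by
    intro n
    rcases eq_or_lt_of_le (hdnn n) with h0 | hpos
    · have hxe : x (n+1) = x n := by
        have hdz : dist (x n) (x (n+1)) = 0 := h0.symm
        exact (dist_eq_zero.1 hdz).symm
      have hxx : x (n+1+1) = x (n+1) := by
        rw [hx (n+1), hxe, ← hx n]
        exact hxe
      have hz : d (n+1) = 0 := by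
        simp only [hd]
        rw [hxx, dist_self]
      rw [hz, ← h0]
    · exact (step n hpos).le
  have hanti : Antitone d := antitone_nat_of_succ_le mono
  have hbdd : BddBelow (Set.range d) := by
    refine ⟨0, ?_⟩
    rintro y ⟨n, rfl⟩
    exact hdnn n
  have htend : Tendsto d atTop (nhds (⨅ n, d n)) := tendsto_atTop_ciInf hanti hbdd
  set r := ⨅ n, d n with hrdef
  have hr0 : 0 ≤ r := le_ciInf hdnn
  have hrle : ∀ n, r ≤ d n := fun n => ciInf_le hbdd n
  have hrzero : r = 0 := by
    by_contra hrne
    have hrpos : 0 < r := lt_of_le_of_ne hr0 (Ne.symm hrne)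
    have hψrne : ψ r ≠ 0 := fun h => absurd ((hψ0 _ hr0).1 h) (ne_of_gt hrpos)
    have hψr : 0 < ψ r := lt_of_le_of_ne (hψnn _ hr0) (Ne.symm hψrne)
    set D : ℕ → ℝ := fun n => dist (x n) (x (n+2)) with hD
    have hDb : ∀ n, D n ∈ Set.Icc (0:ℝ) (2 * d 0) := by
      intro n
      refine ⟨dist_nonneg, ?_⟩
      have h1 : d n ≤ d 0 := hanti (Nat.zero_le n)
      have h2 : d (n+1) ≤ d 0 := hanti (Nat.zero_le _)
      have htri : D n ≤ d n + d (n+1) := dist_triangle (x n) (x (n+1)) (x (n+2))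
      linarith
    obtain ⟨L, hLmem, σ, hσ, hDσ⟩ :=
      (isCompact_Icc (a := (0:ℝ)) (b := 2 * d 0)).tendsto_subseq hDb
    have hdσ : Tendsto (fun j => d (σ j)) atTop (nhds r) := htend.comp hσ.tendsto_atTop
    have hσ1 : Tendsto (fun j => σ j + 1) atTop atTop :=
      tendsto_atTop_mono (fun j => Nat.le_succ (σ j)) hσ.tendsto_atTop
    have hdσ1 : Tendsto (fun j => d (σ j + 1)) atTop (nhds r) := htend.comp hσ1
    have hL0 : 0 ≤ L := hLmem.1
    have hL2r : L ≤ 2 * r := by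
      have hsum : Tendsto (fun j => d (σ j) + d (σ j + 1)) atTop (nhds (2 * r)) := by
        have := hdσ.add hdσ1
        simpa [two_mul] using this
      exact le_of_tendsto_of_tendsto' hDσ hsum
        (fun j => dist_triangle (x (σ j)) (x (σ j + 1)) (x (σ j + 2)))
    set l : Fin k → ℝ := fun i => g i r r r L 0 with hl
    have hcoord : ∀ i, Tendsto
        (fun j => g i (d (σ j)) (d (σ j + 1)) (d (σ j)) (D (σ j)) 0) atTop (nhds (l i)) := by
      intro i
      have hc := (hg_cont i).tendsto (r, r, r, L, (0:ℝ))
      have htup : Tendsto (fun j => ((d (σ j)), (d (σ j + 1)), (d (σ j)), (D (σ j)), (0:ℝ)))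
          atTop (nhds (r, r, r, L, (0:ℝ))) :=
        hdσ.prodMk_nhds (hdσ1.prodMk_nhds (hdσ.prodMk_nhds
          (hDσ.prodMk_nhds tendsto_const_nhds)))
      exact hc.comp htup
    have husc := hφusc (fun j i => g i (d (σ j)) (d (σ j + 1)) (d (σ j)) (D (σ j)) 0)
      l hcoord
    -- lower bound ψ r for each term
    have hlow : ∀ j, ψ r ≤ φ (fun i => g i (d (σ j)) (d (σ j + 1)) (d (σ j)) (D (σ j)) 0) := by
      intro j
      have h1 := key (σ j)
      have h2 : ψ r ≤ ψ (d (σ j + 1)) :=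
        hψm (Set.mem_Ici.2 hr0) (Set.mem_Ici.2 (hdnn _)) (hrle _)
      exact h2.trans h1
    -- upper bound for boundedness
    have hub : ∀ j, φ (fun i => g i (d (σ j)) (d (σ j + 1)) (d (σ j)) (D (σ j)) 0)
        ≤ ψ (d 0) := by
      intro j
      by_cases hz : (fun i => g i (d (σ j)) (d (σ j + 1)) (d (σ j)) (D (σ j)) 0)
          = (0 : Fin k → ℝ)
      · rw [hz, hφ0]; exact hψnn _ (hdnn 0)
      · have hlt := hφlt _ (fun i => gnn i _ _ _ _ _ (hdnn _) (hdnn _) (hdnn _)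
          dist_nonneg le_rfl) hz
        have hsup_le : Finset.univ.sup' ⟨⟨0, hk⟩, Finset.mem_univ _⟩
            (fun i => g i (d (σ j)) (d (σ j + 1)) (d (σ j)) (D (σ j)) 0) ≤ d 0 := by
          apply Finset.sup'_le
          intro i _
          have := sle (σ j) i
          have h1 : d (σ j) ≤ d 0 := hanti (Nat.zero_le _)
          have h2 : d (σ j + 1) ≤ d 0 := hanti (Nat.zero_le _)
          have h3 : max (d (σ j)) (d (σ j + 1)) ≤ d 0 := max_le h1 h2
          exact this.trans h3
        have hsup_nn : 0 ≤ Finset.univ.sup' ⟨⟨0, hk⟩, Finset.mem_univ _⟩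
            (fun i => g i (d (σ j)) (d (σ j + 1)) (d (σ j)) (D (σ j)) 0) :=
          le_trans (gnn ⟨0, hk⟩ _ _ _ _ _ (hdnn _) (hdnn _) (hdnn _) dist_nonneg le_rfl)
            (Finset.le_sup' (fun i => g i (d (σ j)) (d (σ j + 1)) (d (σ j)) (D (σ j)) 0)
              (Finset.mem_univ (⟨0, hk⟩ : Fin k)))
        have := hψm (Set.mem_Ici.2 hsup_nn) (Set.mem_Ici.2 (hdnn 0)) hsup_le
        linarith
    have hbound : IsBoundedUnder (· ≤ ·) atTop
        (fun j => φ (fun i => g i (d (σ j)) (d (σ j + 1)) (d (σ j)) (D (σ j)) 0)) :=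
      isBoundedUnder_of ⟨ψ (d 0), hub⟩
    have hψr_le : ψ r ≤ φ l := by
      refine le_trans (le_limsup_of_frequently_le (Frequently.of_forall hlow) hbound) husc
    by_cases hlz : l = 0
    · rw [hlz, hφ0] at hψr_le
      linarith
    · have hlt := hφlt _ (fun i => gnn i _ _ _ _ _ hr0 hr0 hr0 hL0 le_rfl) hlz
      have hle_r : ∀ i, l i ≤ r := by
        intro i
        have h1 : l i ≤ g i r r r (2*r) 0 :=
          hg_mono i _ _ _ _ _ _ _ _ _ _ hr0 hr0 hr0 hL0 le_rfl
            le_rfl le_rfl le_rfl hL2r le_rfl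
        have h2 : g i r r r (2*r) 0 ≤ r * g i 1 1 1 2 0 := by
          have := hg_subhom i r 1 1 1 2 0 hr0 (by norm_num) (by norm_num) (by norm_num)
            (by norm_num) (by norm_num)
          simpa [mul_comm] using this
        have h3 : r * g i 1 1 1 2 0 ≤ r := by
          nlinarith [(hg3 i).1, (hg3 i).2, hr0]
        linarith
      have hsup_le : Finset.univ.sup' ⟨⟨0, hk⟩, Finset.mem_univ _⟩ l ≤ r :=
        Finset.sup'_le _ _ (fun i _ => hle_r i)
      have hsup_nn : 0 ≤ Finset.univ.sup' ⟨⟨0, hk⟩, Finset.mem_univ _⟩ l :=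
        le_trans (gnn ⟨0, hk⟩ _ _ _ _ _ hr0 hr0 hr0 hL0 le_rfl)
          (Finset.le_sup' l (Finset.mem_univ (⟨0, hk⟩ : Fin k)))
      have := hψm (Set.mem_Ici.2 hsup_nn) (Set.mem_Ici.2 hr0) hsup_le
      linarith
  refine ⟨step, ?_⟩
  rw [← hrzero]
  exact htend
end

section
/- Let (X,d) be a complete metric space, β ∈ (0,1), and T : X → X a mapping such that ∫_0^{d(Tx,Ty)} f(t) dt ≤ β·∫_0^{d(x,y)} f(t) dt for all x, y ∈ X, where f : [0,∞) → (0,∞) is Lebesgue integrable on every compact subset of [0,∞) and ∫_0^ε f(t) dt > 0 for every ε > 0. Then T has a unique fixed point a ∈ X, and T^n x → a for every x ∈ X. -/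
open Filter MeasureTheory intervalIntegral

theorem stmt_17 {X : Type*} [MetricSpace X] [CompleteSpace X] [Nonempty X]
    (β : ℝ) (hβ : β ∈ Set.Ioo (0:ℝ) 1)
    (f : ℝ → ℝ)
    (hf_pos : ∀ t, 0 ≤ t → 0 < f t)
    (hf_int : ∀ b : ℝ, 0 ≤ b → IntegrableOn f (Set.Icc 0 b))
    (hf_eps : ∀ ε : ℝ, 0 < ε → 0 < ∫ t in (0:ℝ)..ε, f t)
    (T : X → X)
    (hT : ∀ x y : X,
      (∫ t in (0:ℝ)..(dist (T x) (T y)), f t) ≤ β * ∫ t in (0:ℝ)..(dist x y), f t) :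
    ∃ a : X, T a = a ∧ (∀ b : X, T b = b → b = a) ∧
      ∀ x : X, Tendsto (fun n => T^[n] x) atTop (nhds a) := by
  obtain ⟨hβ0, hβ1⟩ := hβ
  set F : ℝ → ℝ := fun r => ∫ t in (0:ℝ)..r, f t with hFdef
  -- interval integrability on subintervals of [0, ∞)
  have hII : ∀ a b : ℝ, 0 ≤ a → a ≤ b → IntervalIntegrable f volume a b := by
    intro a b ha hab
    apply MeasureTheory.IntegrableOn.intervalIntegrable
    rw [Set.uIcc_of_le hab]
    exact (hf_int b (ha.trans hab)).mono_set (Set.Icc_subset_Icc ha le_rfl)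
  -- monotonicity of F on [0, ∞)
  have hFmono : ∀ a b : ℝ, 0 ≤ a → a ≤ b → F a ≤ F b := by
    intro a b ha hab
    have h1 : F a + ∫ t in a..b, f t = F b :=
      intervalIntegral.integral_add_adjacent_intervals (hII 0 a le_rfl ha) (hII a b ha hab)
    have h2 : 0 ≤ ∫ t in a..b, f t :=
      intervalIntegral.integral_nonneg hab (fun u hu => (hf_pos u (ha.trans hu.1)).le)
    linarith
  have hFpos : ∀ r : ℝ, 0 < r → 0 < F r := hf_eps
  -- the map is nonexpansive
  have hTle : ∀ x y : X, dist (T x) (T y) ≤ dist x y := by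
    intro x y
    by_cases hxy : dist x y = 0
    · have : x = y := by rwa [dist_eq_zero] at hxy
      simp [this]
    · have hd : 0 < dist x y := lt_of_le_of_ne dist_nonneg (Ne.symm hxy)
      by_contra h
      push_neg at h
      have hm : F (dist x y) ≤ F (dist (T x) (T y)) := hFmono _ _ hd.le h.le
      have := hT x y
      nlinarith [hFpos _ hd]
  -- key: every orbit converges
  have key : ∀ x0 : X, ∃ a : X, Tendsto (fun n => T^[n] x0) atTop (nhds a) := by
    intro x0
    -- geometric decay of F of consecutive distances
    have hgeo : ∀ n : ℕ, F (dist (T^[n+1] x0) (T^[n] x0)) ≤ β ^ n * F (dist (T x0) x0) := by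
      intro n
      induction n with
      | zero => simp
      | succ n ih =>
        have h1 := hT (T^[n+1] x0) (T^[n] x0)
        have h2 : T (T^[n+1] x0) = T^[n+2] x0 := (Function.iterate_succ_apply' T (n+1) x0).symm
        have h3 : T (T^[n] x0) = T^[n+1] x0 := (Function.iterate_succ_apply' T n x0).symm
        rw [h2, h3] at h1
        calc F (dist (T^[n+2] x0) (T^[n+1] x0)) ≤ β * F (dist (T^[n+1] x0) (T^[n] x0)) := h1
          _ ≤ β * (β ^ n * F (dist (T x0) x0)) := by nlinarith
          _ = β ^ (n+1) * F (dist (T x0) x0) := by ring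
    -- consecutive distances get small
    have hsmall : ∀ δ : ℝ, 0 < δ → ∃ N : ℕ, ∀ n ≥ N, dist (T^[n+1] x0) (T^[n] x0) < δ := by
      intro δ hδ
      have htend : Tendsto (fun n : ℕ => β ^ n * F (dist (T x0) x0)) atTop (nhds 0) := by
        rw [show (0:ℝ) = 0 * F (dist (T x0) x0) by ring]
        exact (tendsto_pow_atTop_nhds_zero_of_lt_one hβ0.le hβ1).mul_const _
      have := (htend.eventually (eventually_lt_nhds (hFpos δ hδ))).exists_forall_of_atTop
      obtain ⟨N, hN⟩ := this
      refine ⟨N, fun n hn => ?_⟩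
      by_contra h
      push_neg at h
      have := hFmono δ _ hδ.le h
      have := hgeo n
      have := hN n hn
      linarith
    have hcauchy : CauchySeq (fun n => T^[n] x0) := by
      rw [Metric.cauchySeq_iff']
      intro ε hε
      -- choose δ' with F (ε - δ') > β * F ε
      have hcont : ContinuousOn F (Set.uIcc 0 ε) := by
        apply intervalIntegral.continuousOn_primitive_interval
        rw [Set.uIcc_of_le hε.le]
        exact hf_int ε hε.le
      have hεmem : ε ∈ Set.uIcc (0:ℝ) ε := Set.right_mem_uIcc
      have hlt : β * F ε < F ε := by nlinarith [hFpos ε hε]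
      have hev : ∀ᶠ t in nhdsWithin ε (Set.uIcc 0 ε), β * F ε < F t :=
        (hcont ε hεmem).eventually (eventually_gt_nhds hlt)
      rw [Filter.Eventually, Metric.mem_nhdsWithin_iff] at hev
      obtain ⟨δ, hδ0, hδ⟩ := hev
      set δ' : ℝ := min (δ/2) ε with hδ'def
      have hδ'0 : 0 < δ' := lt_min (by linarith) hε
      have hδ'ε : δ' ≤ ε := min_le_right _ _
      have hFδ' : β * F ε < F (ε - δ') := by
        apply hδ
        constructor
        · rw [Metric.mem_ball, Real.dist_eq]
          have : |ε - δ' - ε| = δ' := by rw [show ε - δ' - ε = -δ' by ring, abs_neg, abs_of_pos hδ'0]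
          rw [this]
          calc δ' ≤ δ/2 := min_le_left _ _
            _ < δ := by linarith
        · rw [Set.uIcc_of_le hε.le]
          constructor <;> linarith
      obtain ⟨N, hN⟩ := hsmall δ' hδ'0
      refine ⟨N, fun m hm => ?_⟩
      obtain ⟨k, rfl⟩ := Nat.exists_eq_add_of_le hm
      -- show by induction on k : ∀ n ≥ N, dist (T^[n+k] x0) (T^[n] x0) < ε
      have main : ∀ k : ℕ, ∀ n : ℕ, N ≤ n → dist (T^[n+k] x0) (T^[n] x0) < ε := by
        intro k
        induction k with
        | zero => intro n _; simpa using hε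
        | succ k ih =>
          intro n hn
          have ih' := ih n hn
          have hc := hT (T^[n+k] x0) (T^[n] x0)
          have e1 : T (T^[n+k] x0) = T^[n+k+1] x0 := (Function.iterate_succ_apply' T (n+k) x0).symm
          have e2 : T (T^[n] x0) = T^[n+1] x0 := (Function.iterate_succ_apply' T n x0).symm
          rw [e1, e2] at hc
          have hFle : F (dist (T^[n+k] x0) (T^[n] x0)) ≤ F ε :=
            hFmono _ _ dist_nonneg ih'.le
          have hβle : β * F (dist (T^[n+k] x0) (T^[n] x0)) ≤ β * F ε := by nlinarith
          have hstep : dist (T^[n+k+1] x0) (T^[n+1] x0) < ε - δ' := by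
            by_contra h
            push_neg at h
            have h0 : (0:ℝ) ≤ ε - δ' := by linarith
            have := hFmono (ε - δ') _ h0 h
            linarith
          calc dist (T^[n+(k+1)] x0) (T^[n] x0)
              ≤ dist (T^[n+k+1] x0) (T^[n+1] x0) + dist (T^[n+1] x0) (T^[n] x0) := by
                have : n + (k+1) = n + k + 1 := by ring
                rw [this]
                exact dist_triangle _ _ _
            _ < (ε - δ') + δ' := by
                have := hN n hn
                linarith [hstep]
            _ = ε := by ring
      exact main k N le_rfl
    obtain ⟨a, ha⟩ := cauchySeq_tendsto_of_complete hcauchy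
    exact ⟨a, ha⟩
  -- a limit of an orbit is a fixed point
  have hfix : ∀ (x0 : X) (a : X), Tendsto (fun n => T^[n] x0) atTop (nhds a) → T a = a := by
    intro x0 a ha
    have h1 : Tendsto (fun n => T^[n+1] x0) atTop (nhds a) :=
      ha.comp (tendsto_add_atTop_nat 1)
    have h2 : Tendsto (fun n => T^[n+1] x0) atTop (nhds (T a)) := by
      rw [tendsto_iff_dist_tendsto_zero]
      apply squeeze_zero (fun n => dist_nonneg) (fun n => ?_)
        ((tendsto_iff_dist_tendsto_zero.mp ha))
      have e : T^[n+1] x0 = T (T^[n] x0) := Function.iterate_succ_apply' T n x0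
      rw [e]
      exact hTle _ _
    exact tendsto_nhds_unique h2 h1
  -- uniqueness of fixed points
  have huniq : ∀ a b : X, T a = a → T b = b → b = a := by
    intro a b haf hbf
    by_contra h
    have hd : 0 < dist b a := dist_pos.mpr h
    have := hT b a
    rw [hbf, haf] at this
    nlinarith [hFpos _ hd]
  obtain ⟨a, ha⟩ := key (Classical.arbitrary X)
  have haf : T a = a := hfix _ a ha
  refine ⟨a, haf, fun b hb => huniq a b haf hb, fun x => ?_⟩
  obtain ⟨a', ha'⟩ := key x
  have := huniq a a' haf (hfix x a' ha')
  rwa [this] at ha'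
end
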